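/- arXiv:2303.11908 — 8 statements merged into one kernel-verified Lean document; each statement's English description precedes it below -/
import Mathlib

section
/- (Bias of the biased periodogram.) Let N ≥ 1 be an integer, let ε > 0, and let M̂ ∈ ℕ satisfy Σ_{|k| ≥ M̂} ‖R[k]‖₂ ≤ ε/2. If N ≥ 2 M̂ ‖R‖₁ / ε, then sup_{s∈[−1/2,1/2]} ‖Φ(s) − Σ_{k=−N+1}^{N−1} e^{−j2πsk} (1 − |k|/N) R[k]‖₂ ≤ ε. -/
/-- The spectral norm (largest singular value): the operator norm of a matrix
acting between Euclidean spaces. -/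
noncomputable def spec2 {𝕜 m n : Type*} [RCLike 𝕜] [Fintype m] [Fintype n] [DecidableEq n]
    (M : Matrix m n 𝕜) : ℝ :=
  letI := Matrix.instL2OpNormedAddCommGroup (𝕜 := 𝕜) (m := m) (n := n)
  ‖M‖

/-- The spectral density `Φ(s) = Σ_{k∈ℤ} e^{−j2πsk} R[k]`. -/
noncomputable def Phi {n : ℕ} (R : ℤ → Matrix (Fin n) (Fin n) ℝ) (s : ℝ) :
    Matrix (Fin n) (Fin n) ℂ :=
  ∑' k : ℤ,
    Complex.exp (-(2 * (Real.pi : ℂ) * (s : ℂ) * (k : ℂ)) * Complex.I) • (R k).map (↑· : ℝ → ℂ)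

open scoped Matrix.Norms.L2Operator
open Matrix

lemma map_complex_norm_le {n : ℕ} (A : Matrix (Fin n) (Fin n) ℝ) :
    ‖A.map ((↑·) : ℝ → ℂ)‖ ≤ ‖A‖ := by
  rw [Matrix.l2_opNorm_def]
  refine ContinuousLinearMap.opNorm_le_bound _ (norm_nonneg A) fun z => ?_
  set u : EuclideanSpace ℝ (Fin n) := WithLp.toLp 2 (fun i => (z i).re) with hu
  set v : EuclideanSpace ℝ (Fin n) := WithLp.toLp 2 (fun i => (z i).im) with hv
  have hz : ∀ i, ((A.map ((↑·) : ℝ → ℂ)).mulVec (fun j => z j)) i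
      = ((A.mulVec u) i : ℂ) + ((A.mulVec v) i : ℂ) * Complex.I := by
    intro i
    simp only [Matrix.mulVec, dotProduct, Matrix.map_apply]
    push_cast
    rw [Finset.sum_mul, ← Finset.sum_add_distrib]
    congr 1; ext j
    have h1 : z j = ((z j).re : ℂ) + ((z j).im : ℂ) * Complex.I := (Complex.re_add_im (z j)).symm
    rw [h1]; ring
  -- norms
  have hnormz : ∀ w : EuclideanSpace ℂ (Fin n), ‖w‖ ^ 2 = ∑ i, ‖w i‖ ^ 2 := by
    intro w
    rw [EuclideanSpace.norm_eq, Real.sq_sqrt (by positivity)]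
  have hnormr : ∀ w : EuclideanSpace ℝ (Fin n), ‖w‖ ^ 2 = ∑ i, (w i) ^ 2 := by
    intro w
    rw [EuclideanSpace.norm_eq, Real.sq_sqrt (by positivity)]
    simp [sq_abs]
  have key : ‖(LinearEquiv.trans Matrix.toEuclideanLin LinearMap.toContinuousLinearMap)
      (A.map ((↑·) : ℝ → ℂ)) z‖ ^ 2 ≤ (‖A‖ * ‖z‖) ^ 2 := by
    have he : ((LinearEquiv.trans Matrix.toEuclideanLin LinearMap.toContinuousLinearMap)
        (A.map ((↑·) : ℝ → ℂ)) z : EuclideanSpace ℂ (Fin n))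
        = (WithLp.equiv 2 (Fin n → ℂ)).symm ((A.map ((↑·) : ℝ → ℂ)).mulVec (fun j => z j)) := rfl
    rw [he, hnormz]
    have step : ∀ i, ‖((WithLp.equiv 2 (Fin n → ℂ)).symm
        ((A.map ((↑·) : ℝ → ℂ)).mulVec (fun j => z j)) i)‖ ^ 2
        = (A.mulVec u i) ^ 2 + (A.mulVec v i) ^ 2 := by
      intro i
      have : ((WithLp.equiv 2 (Fin n → ℂ)).symm
          ((A.map ((↑·) : ℝ → ℂ)).mulVec (fun j => z j)) i)
          = ((A.mulVec u) i : ℂ) + ((A.mulVec v) i : ℂ) * Complex.I := hz i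
      rw [this, Complex.sq_norm, Complex.normSq_add_mul_I]
    rw [Finset.sum_congr rfl fun i _ => step i, Finset.sum_add_distrib]
    have hAu : ∑ i, (A.mulVec u i) ^ 2 ≤ ‖A‖ ^ 2 * ‖u‖ ^ 2 := by
      have := Matrix.l2_opNorm_mulVec A u
      have h2 : ‖(EuclideanSpace.equiv (Fin n) ℝ).symm (A.mulVec u)‖ ^ 2 ≤ (‖A‖ * ‖u‖) ^ 2 :=
        pow_le_pow_left₀ (norm_nonneg _) this 2
      rw [hnormr] at h2
      calc ∑ i, (A.mulVec u i) ^ 2 = ∑ i, (((EuclideanSpace.equiv (Fin n) ℝ).symm (A.mulVec u) : EuclideanSpace ℝ (Fin n)) i) ^ 2 := rfl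
        _ ≤ (‖A‖ * ‖u‖) ^ 2 := h2
        _ = ‖A‖ ^ 2 * ‖u‖ ^ 2 := by ring
    have hAv : ∑ i, (A.mulVec v i) ^ 2 ≤ ‖A‖ ^ 2 * ‖v‖ ^ 2 := by
      have := Matrix.l2_opNorm_mulVec A v
      have h2 : ‖(EuclideanSpace.equiv (Fin n) ℝ).symm (A.mulVec v)‖ ^ 2 ≤ (‖A‖ * ‖v‖) ^ 2 :=
        pow_le_pow_left₀ (norm_nonneg _) this 2
      rw [hnormr] at h2
      calc ∑ i, (A.mulVec v i) ^ 2 = ∑ i, (((EuclideanSpace.equiv (Fin n) ℝ).symm (A.mulVec v) : EuclideanSpace ℝ (Fin n)) i) ^ 2 := rfl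
        _ ≤ (‖A‖ * ‖v‖) ^ 2 := h2
        _ = ‖A‖ ^ 2 * ‖v‖ ^ 2 := by ring
    have hzsq : ‖z‖ ^ 2 = ‖u‖ ^ 2 + ‖v‖ ^ 2 := by
      rw [hnormz, hnormr, hnormr, ← Finset.sum_add_distrib]
      congr 1; ext i
      rw [Complex.sq_norm, Complex.normSq_apply]; simp [hu, hv, sq]
    calc ∑ i, (A.mulVec u i) ^ 2 + ∑ i, (A.mulVec v i) ^ 2
        ≤ ‖A‖ ^ 2 * ‖u‖ ^ 2 + ‖A‖ ^ 2 * ‖v‖ ^ 2 := add_le_add hAu hAv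
      _ = (‖A‖ * ‖z‖) ^ 2 := by rw [mul_pow, hzsq]; ring
  exact (pow_le_pow_iff_left₀ (norm_nonneg _) (by positivity) two_ne_zero).mp key

theorem bias_biased_periodogram {n : ℕ} (hn : 1 ≤ n)
    (R : ℤ → Matrix (Fin n) (Fin n) ℝ)
    (hsum : Summable fun k : ℤ => spec2 (R k))
    (hRpos : 0 < ∑' k : ℤ, spec2 (R k))
    (N : ℕ) (hN : 1 ≤ N) (ε : ℝ) (hε : 0 < ε) (Mhat : ℕ)
    (hMhat : ∑' k : {k : ℤ // Mhat ≤ k.natAbs}, spec2 (R k.val) ≤ ε / 2)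
    (hNlarge : (N : ℝ) ≥ 2 * Mhat * (∑' k : ℤ, spec2 (R k)) / ε) :
    ∀ s ∈ Set.Icc (-(1:ℝ)/2) (1/2),
      spec2 (Phi R s -
        ∑ k ∈ Finset.Icc (-(N : ℤ) + 1) ((N : ℤ) - 1),
          (((1 - (k.natAbs : ℝ) / N : ℝ) : ℂ) *
              Complex.exp (-(2 * (Real.pi : ℂ) * (s : ℂ) * (k : ℂ)) * Complex.I)) •
            (R k).map (↑· : ℝ → ℂ)) ≤ ε := by
  intro s _
  haveI : CompleteSpace (Matrix (Fin n) (Fin n) ℂ) := FiniteDimensional.complete ℂ _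
  have hNpos : (0:ℝ) < N := by exact_mod_cast hN
  have hspecR : ∀ M : Matrix (Fin n) (Fin n) ℝ, spec2 M = ‖M‖ := fun _ => rfl
  have hRnn : ∀ k, 0 ≤ spec2 (R k) := fun k => by rw [hspecR]; exact norm_nonneg _
  set e : ℤ → ℂ := fun k => Complex.exp (-(2 * (Real.pi:ℂ) * (s:ℂ) * (k:ℂ)) * Complex.I) with he
  have hnorme : ∀ k : ℤ, ‖e k‖ = 1 := by
    intro k
    have h1 : (-(2 * (Real.pi:ℂ) * (s:ℂ) * (k:ℂ))) = ((-(2*Real.pi*s*k) : ℝ) : ℂ) := by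
      push_cast; ring
    rw [he]; simp only [h1, Complex.norm_exp]
    simp
  set f : ℤ → Matrix (Fin n) (Fin n) ℂ := fun k => e k • (R k).map ((↑·) : ℝ → ℂ) with hf
  have hfn : ∀ k, ‖f k‖ ≤ spec2 (R k) := by
    intro k
    calc ‖f k‖ = ‖e k‖ * ‖(R k).map ((↑·) : ℝ → ℂ)‖ := norm_smul _ _
      _ = ‖(R k).map ((↑·) : ℝ → ℂ)‖ := by rw [hnorme, one_mul]
      _ ≤ ‖R k‖ := map_complex_norm_le _
      _ = spec2 (R k) := (hspecR _).symm
  have hsumf : Summable f := Summable.of_norm_bounded hsum hfn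
  set T : ℤ → Matrix (Fin n) (Fin n) ℂ := fun k =>
    if k ∈ Finset.Icc (-(N : ℤ) + 1) ((N : ℤ) - 1) then
      (((1 - (k.natAbs : ℝ) / N : ℝ) : ℂ) * e k) • (R k).map ((↑·) : ℝ → ℂ) else 0 with hT
  have hsumT : Summable T := summable_of_ne_finset_zero (fun k hk => if_neg hk)
  have hfin : (∑ k ∈ Finset.Icc (-(N : ℤ) + 1) ((N : ℤ) - 1),
      (((1 - (k.natAbs : ℝ) / N : ℝ) : ℂ) * e k) • (R k).map ((↑·) : ℝ → ℂ)) = ∑' k, T k := by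
    rw [tsum_eq_sum (s := Finset.Icc (-(N : ℤ) + 1) ((N : ℤ) - 1)) (fun k hk => if_neg hk)]
    refine Finset.sum_congr rfl fun k hk => ?_
    simp only [hT, if_pos hk]
  have hPhi : Phi R s = ∑' k, f k := rfl
  have hdiff : Phi R s - (∑ k ∈ Finset.Icc (-(N : ℤ) + 1) ((N : ℤ) - 1),
      (((1 - (k.natAbs : ℝ) / N : ℝ) : ℂ) * e k) • (R k).map ((↑·) : ℝ → ℂ))
      = ∑' k, (f k - T k) := by
    rw [hPhi, hfin, Summable.tsum_sub hsumf hsumT]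
  set b : ℤ → ℝ := fun k => min ((k.natAbs:ℝ)/N) 1 * spec2 (R k) with hb
  have hbnn : ∀ k, 0 ≤ b k := by
    intro k
    apply mul_nonneg _ (hRnn k)
    exact le_min (by positivity) zero_le_one
  have hble : ∀ k, b k ≤ spec2 (R k) := by
    intro k
    calc b k ≤ 1 * spec2 (R k) := mul_le_mul_of_nonneg_right (min_le_right _ _) (hRnn k)
      _ = spec2 (R k) := one_mul _
  have hsumb : Summable b := Summable.of_nonneg_of_le hbnn hble hsum
  have hgb : ∀ k, ‖f k - T k‖ ≤ b k := by
    intro k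
    by_cases hk : k ∈ Finset.Icc (-(N : ℤ) + 1) ((N : ℤ) - 1)
    · have hkN : (k.natAbs : ℝ) ≤ (N:ℝ) := by
        have := Finset.mem_Icc.mp hk
        have h2 : (k.natAbs : ℤ) ≤ (N : ℤ) := by omega
        exact_mod_cast h2
      have hmin : min ((k.natAbs:ℝ)/N) 1 = (k.natAbs:ℝ)/N :=
        min_eq_left (by rw [div_le_one hNpos]; exact hkN)
      have hfT : f k - T k = ((((k.natAbs:ℝ)/N : ℝ) : ℂ) * e k) • ((R k).map ((↑·) : ℝ → ℂ)) := by
        rw [hf, hT]; simp only [if_pos hk]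
        rw [← sub_smul]
        congr 1
        push_cast
        ring
      rw [hfT]
      simp only [hb]
      rw [hmin]
      calc ‖((((k.natAbs:ℝ)/N : ℝ) : ℂ) * e k) • ((R k).map ((↑·) : ℝ → ℂ))‖
          = ‖(((k.natAbs:ℝ)/N : ℝ) : ℂ) * e k‖ * ‖(R k).map ((↑·) : ℝ → ℂ)‖ := norm_smul _ _
        _ = ((k.natAbs:ℝ)/N) * ‖(R k).map ((↑·) : ℝ → ℂ)‖ := by
            rw [norm_mul, hnorme, mul_one, Complex.norm_real, Real.norm_eq_abs,
              abs_of_nonneg (by positivity)]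
        _ ≤ ((k.natAbs:ℝ)/N) * spec2 (R k) := by
            apply mul_le_mul_of_nonneg_left _ (by positivity)
            rw [hspecR]; exact map_complex_norm_le _
    · have hkN : (N : ℝ) ≤ (k.natAbs : ℝ) := by
        simp only [Finset.mem_Icc, not_and_or, not_le] at hk
        have h2 : (N : ℤ) ≤ (k.natAbs : ℤ) := by omega
        exact_mod_cast h2
      have hmin : min ((k.natAbs:ℝ)/N) 1 = 1 :=
        min_eq_right ((one_le_div hNpos).mpr hkN)
      rw [hT]; simp only [if_neg hk, sub_zero]
      simp only [hb]
      rw [hmin, one_mul]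
      exact hfn k
  have hsumnorm : Summable (fun k => ‖f k - T k‖) :=
    Summable.of_nonneg_of_le (fun k => norm_nonneg _) hgb hsumb
  rw [hdiff]
  have step1 : spec2 (∑' k, (f k - T k)) ≤ ∑' k, ‖f k - T k‖ := norm_tsum_le_tsum_norm hsumnorm
  have step2 : ∑' k, ‖f k - T k‖ ≤ ∑' k, b k := Summable.tsum_le_tsum hgb hsumnorm hsumb
  -- now bound ∑' b ≤ ε
  set S := ∑' k : ℤ, spec2 (R k) with hS
  set s1 : Set ℤ := {k : ℤ | Mhat ≤ k.natAbs} with hs1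
  have hsplit : ∑' (k : s1), b k + ∑' (k : ↥s1ᶜ), b k = ∑' k, b k :=
    Summable.tsum_subtype_add_tsum_subtype_compl hsumb s1
  have hpartA : ∑' (k : s1), b k ≤ ε / 2 := by
    calc ∑' (k : s1), b k ≤ ∑' (k : s1), spec2 (R k.val) :=
          Summable.tsum_le_tsum (fun k => hble k.val) (hsumb.subtype _) (hsum.subtype _)
      _ ≤ ε / 2 := hMhat
  have hpartB : ∑' (k : ↥s1ᶜ), b k ≤ (Mhat : ℝ) / N * S := by
    have hbk : ∀ k : ↥s1ᶜ, b k ≤ (Mhat : ℝ) / N * spec2 (R k.val) := by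
      intro ⟨k, hk⟩
      have hk' : k.natAbs < Mhat := by
        simpa [hs1, Set.mem_compl_iff, Set.mem_setOf_eq, not_le] using hk
      have h1 : (k.natAbs : ℝ) ≤ (Mhat : ℝ) := by exact_mod_cast hk'.le
      calc b k ≤ (k.natAbs:ℝ)/N * spec2 (R k) :=
            mul_le_mul_of_nonneg_right (min_le_left _ _) (hRnn k)
        _ ≤ (Mhat : ℝ) / N * spec2 (R k) :=
            mul_le_mul_of_nonneg_right (by gcongr) (hRnn k)
    calc ∑' (k : ↥s1ᶜ), b k ≤ ∑' (k : ↥s1ᶜ), (Mhat : ℝ) / N * spec2 (R k.val) :=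
          Summable.tsum_le_tsum hbk (hsumb.subtype _) ((hsum.mul_left _).subtype _)
      _ = (Mhat : ℝ) / N * ∑' (k : ↥s1ᶜ), spec2 (R k.val) := tsum_mul_left
      _ ≤ (Mhat : ℝ) / N * S := by
          apply mul_le_mul_of_nonneg_left _ (by positivity)
          exact Summable.tsum_subtype_le (fun k : ℤ => spec2 (R k)) _ hRnn hsum
  have hfinal : (Mhat : ℝ) / N * S ≤ ε / 2 := by
    rw [ge_iff_le, div_le_iff₀ hε] at hNlarge
    rw [div_mul_eq_mul_div, div_le_iff₀ hNpos]
    nlinarith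
  calc spec2 (∑' k, (f k - T k)) ≤ ∑' k, b k := le_trans step1 step2
    _ = ∑' (k : s1), b k + ∑' (k : ↥s1ᶜ), b k := hsplit.symm
    _ ≤ ε / 2 + ε / 2 := add_le_add hpartA (hpartB.trans hfinal)
    _ = ε := by ring
end

section
/- (Bias of the Bartlett estimator.) Let M ≥ 1 be an integer, let ε > 0, and let M̂ ∈ ℕ satisfy Σ_{|k| ≥ M̂} ‖R[k]‖₂ ≤ ε/2. If M ≥ 2 M̂ ‖R‖₁ / ε, then sup_{s∈[−1/2,1/2]} ‖Φ(s) − Σ_{k=−M+1}^{M−1} e^{−j2πsk} (1 − |k|/M) R[k]‖₂ ≤ ε. -/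
open scoped Matrix.Norms.L2Operator

lemma map_ofReal_norm_le {n : ℕ} (A : Matrix (Fin n) (Fin n) ℝ) :
    ‖A.map (↑· : ℝ → ℂ)‖ ≤ ‖A‖ := by
  rw [Matrix.l2_opNorm_def]
  apply ContinuousLinearMap.opNorm_le_bound _ (norm_nonneg A)
  intro x
  set u : EuclideanSpace ℝ (Fin n) := (EuclideanSpace.equiv (Fin n) ℝ).symm (fun i => (x i).re)
    with hu
  set v : EuclideanSpace ℝ (Fin n) := (EuclideanSpace.equiv (Fin n) ℝ).symm (fun i => (x i).im)
    with hv
  have key : ∀ i, (A.map (↑· : ℝ → ℂ)).mulVec x i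
      = Complex.ofReal (A.mulVec (fun j => (x j).re) i)
        + Complex.ofReal (A.mulVec (fun j => (x j).im) i) * Complex.I := by
    intro i
    simp only [Matrix.mulVec, dotProduct, Matrix.map_apply, Complex.ofReal_sum,
      Finset.sum_mul, ← Finset.sum_add_distrib]
    refine Finset.sum_congr rfl fun j _ => ?_
    conv_lhs => rw [← Complex.re_add_im (x j)]
    push_cast
    ring
  have hBx : ‖(EuclideanSpace.equiv (Fin n) ℂ).symm ((A.map (↑· : ℝ → ℂ)).mulVec x)‖ ^ 2
      = ‖(EuclideanSpace.equiv (Fin n) ℝ).symm (A.mulVec (fun j => (x j).re))‖ ^ 2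
        + ‖(EuclideanSpace.equiv (Fin n) ℝ).symm (A.mulVec (fun j => (x j).im))‖ ^ 2 := by
    simp only [EuclideanSpace.norm_eq]
    rw [Real.sq_sqrt (by positivity), Real.sq_sqrt (by positivity), Real.sq_sqrt (by positivity)]
    rw [← Finset.sum_add_distrib]
    refine Finset.sum_congr rfl fun i _ => ?_
    rw [show ((EuclideanSpace.equiv (Fin n) ℂ).symm ((A.map (↑· : ℝ → ℂ)).mulVec x)) i
        = (A.map (↑· : ℝ → ℂ)).mulVec x i from rfl, key i]
    simp [Complex.sq_norm, Complex.normSq_apply, Real.norm_eq_abs,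
      sq_abs]
    ring
  have hx : ‖x‖ ^ 2 = ‖u‖ ^ 2 + ‖v‖ ^ 2 := by
    simp only [EuclideanSpace.norm_eq]
    rw [Real.sq_sqrt (by positivity), Real.sq_sqrt (by positivity), Real.sq_sqrt (by positivity)]
    rw [← Finset.sum_add_distrib]
    refine Finset.sum_congr rfl fun i _ => ?_
    simp [hu, hv, Complex.sq_norm, Complex.normSq_apply, Real.norm_eq_abs,
      sq_abs]
    ring
  have h1 : ‖(EuclideanSpace.equiv (Fin n) ℝ).symm (A.mulVec (fun j => (x j).re))‖ ≤ ‖A‖ * ‖u‖ := by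
    simpa [hu] using A.l2_opNorm_mulVec u
  have h2 : ‖(EuclideanSpace.equiv (Fin n) ℝ).symm (A.mulVec (fun j => (x j).im))‖ ≤ ‖A‖ * ‖v‖ := by
    simpa [hv] using A.l2_opNorm_mulVec v
  have hgoal : ‖(EuclideanSpace.equiv (Fin n) ℂ).symm ((A.map (↑· : ℝ → ℂ)).mulVec x)‖ ^ 2
      ≤ (‖A‖ * ‖x‖) ^ 2 := by
    rw [hBx]
    have hA := norm_nonneg A
    have h3 : (‖A‖*‖x‖)^2 = ‖A‖^2 * ‖x‖^2 := by ring
    rw [h3, hx]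
    nlinarith [norm_nonneg ((EuclideanSpace.equiv (Fin n) ℝ).symm (A.mulVec (fun j => (x j).re))),
      norm_nonneg ((EuclideanSpace.equiv (Fin n) ℝ).symm (A.mulVec (fun j => (x j).im))),
      norm_nonneg u, norm_nonneg v]
  have hfinal : ‖(EuclideanSpace.equiv (Fin n) ℂ).symm ((A.map (↑· : ℝ → ℂ)).mulVec x)‖
      ≤ ‖A‖ * ‖x‖ := by
    nlinarith [norm_nonneg ((EuclideanSpace.equiv (Fin n) ℂ).symm ((A.map (↑· : ℝ → ℂ)).mulVec x)),
      mul_nonneg (norm_nonneg A) (norm_nonneg x)]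
  exact hfinal

theorem bias_bartlett {n : ℕ} (hn : 1 ≤ n)
    (R : ℤ → Matrix (Fin n) (Fin n) ℝ)
    (hsum : Summable fun k : ℤ => spec2 (R k))
    (hRpos : 0 < ∑' k : ℤ, spec2 (R k))
    (M : ℕ) (hM : 1 ≤ M) (ε : ℝ) (hε : 0 < ε) (Mhat : ℕ)
    (hMhat : ∑' k : {k : ℤ // Mhat ≤ k.natAbs}, spec2 (R k.val) ≤ ε / 2)
    (hMlarge : (M : ℝ) ≥ 2 * Mhat * (∑' k : ℤ, spec2 (R k)) / ε) :
    ∀ s ∈ Set.Icc (-(1:ℝ)/2) (1/2),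
      spec2 (Phi R s -
        ∑ k ∈ Finset.Icc (-(M : ℤ) + 1) ((M : ℤ) - 1),
          (((1 - (k.natAbs : ℝ) / M : ℝ) : ℂ) *
              Complex.exp (-(2 * (Real.pi : ℂ) * (s : ℂ) * (k : ℂ)) * Complex.I)) •
            (R k).map (↑· : ℝ → ℂ)) ≤ ε := by
  intro s hs
  have hM0 : (0:ℝ) < M := by exact_mod_cast hM
  have hsum' : Summable fun k : ℤ => ‖R k‖ := hsum
  set e : ℤ → ℂ := fun k => Complex.exp (-(2 * (Real.pi : ℂ) * (s : ℂ) * (k : ℂ)) * Complex.I)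
    with he_def
  have he : ∀ k, ‖e k‖ = 1 := by
    intro k
    simp only [he_def, Complex.norm_exp]
    norm_num [Complex.mul_re]
  set f : ℤ → Matrix (Fin n) (Fin n) ℂ := fun k => e k • (R k).map (↑· : ℝ → ℂ) with hf_def
  set t : ℤ → Matrix (Fin n) (Fin n) ℂ := fun k =>
    if k.natAbs < M then (((1 - (k.natAbs : ℝ) / M : ℝ) : ℂ) * e k) • (R k).map (↑· : ℝ → ℂ)
    else 0 with ht_def
  have hfn : ∀ k, ‖f k‖ ≤ ‖R k‖ := by
    intro k
    rw [hf_def]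
    simp only
    rw [norm_smul, he]
    simpa using map_ofReal_norm_le (R k)
  have hsummf_norm : Summable fun k => ‖f k‖ :=
    hsum'.of_nonneg_of_le (fun k => norm_nonneg _) hfn
  have hsummf : Summable f := hsummf_norm.of_norm
  have hsummt : Summable t := by
    apply summable_of_ne_finset_zero (s := Finset.Icc (-(M : ℤ) + 1) ((M : ℤ) - 1))
    intro k hk
    rw [ht_def]
    simp only
    rw [if_neg]
    intro h
    apply hk
    rw [Finset.mem_Icc]
    omega
  have hmem : ∀ k : ℤ, k ∈ Finset.Icc (-(M : ℤ) + 1) ((M : ℤ) - 1) ↔ k.natAbs < M := by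
    intro k; rw [Finset.mem_Icc]; omega
  have hfin : (∑ k ∈ Finset.Icc (-(M : ℤ) + 1) ((M : ℤ) - 1),
      (((1 - (k.natAbs : ℝ) / M : ℝ) : ℂ) * e k) • (R k).map (↑· : ℝ → ℂ)) = ∑' k, t k := by
    rw [tsum_eq_sum (s := Finset.Icc (-(M : ℤ) + 1) ((M : ℤ) - 1))]
    · refine Finset.sum_congr rfl fun k hk => ?_
      rw [ht_def]
      simp only
      rw [if_pos ((hmem k).mp hk)]
    · intro k hk
      rw [ht_def]
      simp only
      rw [if_neg fun h => hk ((hmem k).mpr h)]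
  have hPhi : Phi R s = ∑' k, f k := rfl
  show ‖Phi R s - _‖ ≤ ε
  rw [hPhi, hfin, ← Summable.tsum_sub hsummf hsummt]
  -- bound function
  set b : ℤ → ℝ := fun k => if k.natAbs < M then (k.natAbs : ℝ) / M else 1 with hb_def
  have hb_nonneg : ∀ k, 0 ≤ b k * ‖R k‖ := by
    intro k
    apply mul_nonneg _ (norm_nonneg _)
    rw [hb_def]
    simp only
    split <;> positivity
  have hterm : ∀ k, ‖f k - t k‖ ≤ b k * ‖R k‖ := by
    intro k
    rw [hf_def, ht_def, hb_def]
    simp only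
    split
    · rw [← sub_smul, norm_smul]
      have : e k - ((1 - (k.natAbs : ℝ) / M : ℝ) : ℂ) * e k
          = (((k.natAbs : ℝ) / M : ℝ) : ℂ) * e k := by
        push_cast; ring
      rw [this, norm_mul, he, mul_one, Complex.norm_real, Real.norm_eq_abs,
        abs_of_nonneg (by positivity)]
      exact mul_le_mul_of_nonneg_left (map_ofReal_norm_le (R k)) (by positivity)
    · rw [sub_zero, norm_smul, he, one_mul]
      calc ‖(R k).map (↑· : ℝ → ℂ)‖ ≤ ‖R k‖ := map_ofReal_norm_le (R k)
        _ = 1 * ‖R k‖ := (one_mul _).symm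
  have hble : ∀ k, b k ≤ 1 := by
    intro k
    rw [hb_def]
    simp only
    split
    · rw [div_le_one hM0]
      exact_mod_cast le_of_lt (by assumption)
    · exact le_rfl
  have hsummb : Summable fun k => b k * ‖R k‖ := by
    apply hsum'.of_nonneg_of_le hb_nonneg
    intro k
    calc b k * ‖R k‖ ≤ 1 * ‖R k‖ :=
          mul_le_mul_of_nonneg_right (hble k) (norm_nonneg _)
      _ = ‖R k‖ := one_mul _
  have hsummd : Summable fun k => ‖f k - t k‖ :=
    hsummb.of_nonneg_of_le (fun k => norm_nonneg _) hterm
  have step1 : ‖∑' k, (f k - t k)‖ ≤ ∑' k, (b k * ‖R k‖) :=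
    le_trans (norm_tsum_le_tsum_norm hsummd) (Summable.tsum_le_tsum hterm hsummd hsummb)
  refine le_trans step1 ?_
  -- final scalar estimate
  set S : Set ℤ := {k | Mhat ≤ k.natAbs} with hS_def
  have hT : (∑' k : ℤ, spec2 (R k)) = ∑' k : ℤ, ‖R k‖ := rfl
  have hTnn : 0 ≤ ∑' k : ℤ, ‖R k‖ := le_of_lt (hT ▸ hRpos)
  have hsplit := Summable.tsum_add_tsum_compl (s := S) (hsummb.subtype S) (hsummb.subtype Sᶜ)
  have hpart1 : (∑' k : ↥S, (b k.val * ‖R k.val‖)) ≤ ε / 2 := by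
    refine le_trans (Summable.tsum_le_tsum (f := fun k : ↥S => b k.val * ‖R k.val‖)
      (g := fun k : ↥S => ‖R k.val‖) ?_ (hsummb.subtype S) (hsum'.subtype S)) ?_
    · intro k
      calc b k.val * ‖R k.val‖ ≤ 1 * ‖R k.val‖ :=
            mul_le_mul_of_nonneg_right (hble k.val) (norm_nonneg _)
        _ = ‖R k.val‖ := one_mul _
    · exact hMhat
  have hc : (0:ℝ) ≤ (Mhat : ℝ) / M := by positivity
  have hpart2 : (∑' k : ↥Sᶜ, (b k.val * ‖R k.val‖)) ≤ ε / 2 := by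
    have hblt : ∀ k : ↥Sᶜ, b k.val * ‖R k.val‖ ≤ ((Mhat : ℝ) / M) * ‖R k.val‖ := by
      rintro ⟨k, hk⟩
      have hk' : k.natAbs < Mhat := by
        have hk2 : ¬ Mhat ≤ k.natAbs := hk
        omega
      apply mul_le_mul_of_nonneg_right _ (norm_nonneg _)
      rw [hb_def]
      simp only
      split
      · gcongr
      · rename_i h
        rw [le_div_iff₀ hM0, one_mul]
        have h1 : M ≤ k.natAbs := Nat.not_lt.mp h
        have : M ≤ Mhat := le_trans h1 (le_of_lt hk')
        exact_mod_cast this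
    have h2 : (∑' k : ↥Sᶜ, (b k.val * ‖R k.val‖))
        ≤ ∑' k : ↥Sᶜ, ((Mhat : ℝ) / M) * ‖R k.val‖ :=
      Summable.tsum_le_tsum hblt (hsummb.subtype _) ((hsum'.mul_left _).subtype _)
    have h3 : (∑' k : ↥Sᶜ, ((Mhat : ℝ) / M) * ‖R k.val‖)
        = ((Mhat : ℝ) / M) * ∑' k : ↥Sᶜ, ‖R k.val‖ := tsum_mul_left
    have h4 : (∑' k : ↥Sᶜ, ‖R k.val‖) ≤ ∑' k : ℤ, ‖R k‖ := by
      have hsplitR := Summable.tsum_add_tsum_compl (s := S) (hsum'.subtype S) (hsum'.subtype Sᶜ)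
      have hnn : 0 ≤ ∑' k : ↥S, ‖R k.val‖ := tsum_nonneg fun k => norm_nonneg _
      linarith
    have h5 : ((Mhat : ℝ) / M) * (∑' k : ℤ, ‖R k‖) ≤ ε / 2 := by
      rw [ge_iff_le, div_le_iff₀ hε] at hMlarge
      rw [hT] at hMlarge
      rw [div_mul_eq_mul_div, div_le_iff₀ hM0]
      nlinarith
    calc (∑' k : ↥Sᶜ, (b k.val * ‖R k.val‖)) ≤ _ := h2
      _ = _ := h3
      _ ≤ ((Mhat : ℝ) / M) * (∑' k : ℤ, ‖R k‖) := mul_le_mul_of_nonneg_left h4 hc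
      _ ≤ ε / 2 := h5
  linarith
end

section
/- (Explicit Bartlett bias bound under geometric decay.) Assume there are constants γ > 0 and ρ ∈ [0, 1) such that ‖R[k]‖₂ ≤ γρ^{|k|} for all k ∈ ℤ, and let M ≥ 1 be an integer. Then sup_{s∈[−1/2,1/2]} ‖Φ(s) − Σ_{k=−M+1}^{M−1} e^{−j2πsk} (1 − |k|/M) R[k]‖₂ ≤ 2γρ/((1 − ρ)² M) + 2γ (ρ²/(1 − ρ)² + 1/(1 − ρ)) ρ^{M}. -/
open scoped Matrix.Norms.L2Operator

lemma l2_opNorm_map_ofReal {m n : ℕ} (A : Matrix (Fin m) (Fin n) ℝ) :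
    ‖A.map (Complex.ofReal)‖ ≤ ‖A‖ := by
  rw [Matrix.l2_opNorm_def]
  refine ContinuousLinearMap.opNorm_le_bound _ (norm_nonneg _) fun x => ?_
  set u : EuclideanSpace ℝ (Fin n) := (WithLp.equiv 2 _).symm (fun j => (x j).re) with hu
  set v : EuclideanSpace ℝ (Fin n) := (WithLp.equiv 2 _).symm (fun j => (x j).im) with hv
  have hAu : ‖(EuclideanSpace.equiv (Fin m) ℝ).symm (A.mulVec ((WithLp.equiv 2 _) u))‖ ≤ ‖A‖ * ‖u‖ :=
    A.l2_opNorm_mulVec u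
  have hAv : ‖(EuclideanSpace.equiv (Fin m) ℝ).symm (A.mulVec ((WithLp.equiv 2 _) v))‖ ≤ ‖A‖ * ‖v‖ :=
    A.l2_opNorm_mulVec v
  have hx2 : ‖x‖ ^ 2 = ‖u‖ ^ 2 + ‖v‖ ^ 2 := by
    rw [EuclideanSpace.norm_eq, EuclideanSpace.norm_eq, EuclideanSpace.norm_eq,
      Real.sq_sqrt (by positivity), Real.sq_sqrt (by positivity), Real.sq_sqrt (by positivity)]
    rw [← Finset.sum_add_distrib]
    congr 1; ext i
    simp [hu, hv, Complex.sq_norm, Complex.normSq_apply, Real.norm_eq_abs,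
      sq_abs]
    ring
  have hL2 : ‖(LinearEquiv.trans Matrix.toEuclideanLin LinearMap.toContinuousLinearMap)
      (A.map (Complex.ofReal)) x‖ ^ 2 =
      ‖(EuclideanSpace.equiv (Fin m) ℝ).symm (A.mulVec ((WithLp.equiv 2 _) u))‖ ^ 2 +
      ‖(EuclideanSpace.equiv (Fin m) ℝ).symm (A.mulVec ((WithLp.equiv 2 _) v))‖ ^ 2 := by
    rw [EuclideanSpace.norm_eq, EuclideanSpace.norm_eq, EuclideanSpace.norm_eq,
      Real.sq_sqrt (by positivity), Real.sq_sqrt (by positivity), Real.sq_sqrt (by positivity),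
      ← Finset.sum_add_distrib]
    refine Finset.sum_congr rfl fun i _ => ?_
    simp only [LinearEquiv.trans_apply, LinearMap.coe_toContinuousLinearMap',
      Matrix.toEuclideanLin_apply, WithLp.equiv_symm_apply, WithLp.equiv_apply, PiLp.toLp_apply,
      EuclideanSpace.equiv, Matrix.mulVec, dotProduct, Matrix.map_apply, hu, hv]
    rw [Complex.sq_norm, Complex.normSq_apply, Real.norm_eq_abs,
      Real.norm_eq_abs, sq_abs, sq_abs, Complex.re_sum, Complex.im_sum]
    simp only [Complex.mul_re, Complex.mul_im, Complex.ofReal_re, Complex.ofReal_im,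
      zero_mul, sub_zero, add_zero, zero_add]
    simp only [PiLp.continuousLinearEquiv_symm_apply, Equiv.apply_symm_apply,
      WithLp.equiv_symm_apply, Matrix.mulVec, dotProduct]
    ring
  have h2 : (0:ℝ) ≤ ‖A‖ * ‖x‖ := by positivity
  have hsq : ‖(LinearEquiv.trans Matrix.toEuclideanLin LinearMap.toContinuousLinearMap)
      (A.map (Complex.ofReal)) x‖ ^ 2 ≤ (‖A‖ * ‖x‖) ^ 2 := by
    rw [hL2]
    have e1 := mul_le_mul hAu hAu (norm_nonneg _) (by positivity)
    have e2 := mul_le_mul hAv hAv (norm_nonneg _) (by positivity)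
    nlinarith [sq_nonneg (‖A‖), hx2]
  exact (pow_le_pow_iff_left₀ (norm_nonneg _) h2 (by norm_num)).mp hsq

lemma hasSum_int_natAbs {F : ℕ → ℝ} {a b : ℝ} (h1 : HasSum F a)
    (h2 : HasSum (fun m => F (m + 1)) b) :
    HasSum (fun k : ℤ => F k.natAbs) (a + b) := by
  have h := h1.int_rec h2
  have he : (fun k : ℤ => F k.natAbs) = fun k : ℤ => Int.rec F (fun m => F (m + 1)) k := by
    funext k
    cases k with
    | ofNat n => rfl
    | negSucc m => rfl
  rw [he]
  exact h

theorem bias_bartlett_geometric {n : ℕ} (hn : 1 ≤ n)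
    (R : ℤ → Matrix (Fin n) (Fin n) ℝ)
    (hsum : Summable fun k : ℤ => spec2 (R k))
    (γ ρ : ℝ) (hγ : 0 < γ) (hρ0 : 0 ≤ ρ) (hρ1 : ρ < 1)
    (hdecay : ∀ k : ℤ, spec2 (R k) ≤ γ * ρ ^ k.natAbs)
    (M : ℕ) (hM : 1 ≤ M) :
    ∀ s ∈ Set.Icc (-(1:ℝ)/2) (1/2),
      spec2 (Phi R s -
        ∑ k ∈ Finset.Icc (-(M : ℤ) + 1) ((M : ℤ) - 1),
          (((1 - (k.natAbs : ℝ) / M : ℝ) : ℂ) *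
              Complex.exp (-(2 * (Real.pi : ℂ) * (s : ℂ) * (k : ℂ)) * Complex.I)) •
            (R k).map (↑· : ℝ → ℂ)) ≤
      2 * γ * ρ / ((1 - ρ) ^ 2 * M) +
        2 * γ * (ρ ^ 2 / (1 - ρ) ^ 2 + 1 / (1 - ρ)) * ρ ^ M := by
  intro s hs
  haveI : CompleteSpace (Matrix (Fin n) (Fin n) ℂ) := FiniteDimensional.complete ℂ _
  have h1ρ : (0:ℝ) < 1 - ρ := by linarith
  have hM0 : (0:ℝ) < (M:ℝ) := by exact_mod_cast hM
  set c : ℤ → ℂ := fun k => Complex.exp (-(2 * (Real.pi : ℂ) * (s : ℂ) * (k : ℂ)) * Complex.I)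
    with hc
  set f : ℤ → Matrix (Fin n) (Fin n) ℂ := fun k => c k • (R k).map (↑· : ℝ → ℂ) with hf
  have hnormc : ∀ k : ℤ, ‖c k‖ = 1 := by
    intro k
    rw [hc]
    simp only [Complex.norm_exp]
    have : (-(2 * (Real.pi : ℂ) * (s : ℂ) * (k : ℂ)) * Complex.I).re = 0 := by
      simp [Complex.mul_re, Complex.mul_im]
    rw [this, Real.exp_zero]
  have hfb : ∀ k : ℤ, ‖f k‖ ≤ γ * ρ ^ k.natAbs := by
    intro k
    rw [hf]
    simp only
    rw [norm_smul, hnormc, one_mul]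
    exact le_trans (l2_opNorm_map_ofReal (R k)) (hdecay k)
  -- geometric series facts
  have S1 : HasSum (fun m : ℕ => (m : ℝ) * ρ ^ m) (ρ / (1 - ρ) ^ 2) :=
    hasSum_coe_mul_geometric_of_norm_lt_one
      (by rwa [Real.norm_eq_abs, abs_of_nonneg hρ0])
  have S1' : HasSum (fun m : ℕ => ((m + 1 : ℕ) : ℝ) * ρ ^ (m + 1)) (ρ / (1 - ρ) ^ 2) := by
    refine (hasSum_nat_add_iff (f := fun m : ℕ => (m : ℝ) * ρ ^ m) 1).mpr ?_
    simpa using S1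
  set F2 : ℕ → ℝ := fun m => if M ≤ m then γ * ρ ^ m else 0 with hF2
  have S2 : HasSum F2 (γ * ρ ^ M * (1 - ρ)⁻¹) := by
    have base : HasSum (fun j : ℕ => γ * ρ ^ M * ρ ^ j) (γ * ρ ^ M * (1 - ρ)⁻¹) :=
      (hasSum_geometric_of_lt_one hρ0 hρ1).mul_left _
    have hshift : (fun j : ℕ => F2 (j + M)) = fun j : ℕ => γ * ρ ^ M * ρ ^ j := by
      funext j
      rw [hF2]
      simp only
      rw [if_pos (by omega), pow_add]
      ring
    have h := (hasSum_nat_add_iff (f := F2) M).mp (by rw [hshift]; exact base)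
    have hz : ∑ i ∈ Finset.range M, F2 i = 0 := by
      refine Finset.sum_eq_zero fun i hi => ?_
      rw [hF2]
      simp only
      rw [if_neg (by simp at hi; omega)]
    rw [hz, add_zero] at h
    exact h
  have S2' : HasSum (fun m : ℕ => F2 (m + 1)) (γ * ρ ^ M * (1 - ρ)⁻¹) := by
    refine (hasSum_nat_add_iff (f := F2) 1).mpr ?_
    have hz : ∑ i ∈ Finset.range 1, F2 i = 0 := by
      simp [hF2, Nat.not_succ_le_zero, hM]
      intro h; omega
    rw [hz, add_zero]
    exact S2
  -- the bounding functions over ℤ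
  set b1 : ℤ → ℝ := fun k => (γ / M) * ((k.natAbs : ℝ) * ρ ^ k.natAbs) with hb1
  set b2 : ℤ → ℝ := fun k => F2 k.natAbs with hb2
  have Sb1 : HasSum b1 ((γ / M) * (ρ / (1 - ρ) ^ 2 + ρ / (1 - ρ) ^ 2)) :=
    (hasSum_int_natAbs S1 S1').mul_left _
  have Sb2 : HasSum b2 (γ * ρ ^ M * (1 - ρ)⁻¹ + γ * ρ ^ M * (1 - ρ)⁻¹) :=
    hasSum_int_natAbs S2 S2'
  have Sb : HasSum (fun k => b1 k + b2 k)
      ((γ / M) * (ρ / (1 - ρ) ^ 2 + ρ / (1 - ρ) ^ 2) +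
        (γ * ρ ^ M * (1 - ρ)⁻¹ + γ * ρ ^ M * (1 - ρ)⁻¹)) := Sb1.add Sb2
  -- summability of f
  have hgb : Summable (fun k : ℤ => γ * ρ ^ k.natAbs) := by
    have hpow1 : HasSum (fun m : ℕ => γ * ρ ^ (m + 1)) (γ * ρ * (1 - ρ)⁻¹) := by
      have h0 := (hasSum_geometric_of_lt_one hρ0 hρ1).mul_left (γ * ρ)
      have he : (fun m : ℕ => γ * ρ ^ (m + 1)) = fun m => γ * ρ * ρ ^ m := by
        funext m; rw [pow_succ]; ring
      rw [he]; exact h0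
    exact (hasSum_int_natAbs ((hasSum_geometric_of_lt_one hρ0 hρ1).mul_left γ) hpow1).summable
  have hfs : Summable f := Summable.of_norm_bounded hgb hfb
  -- the term of the Bartlett finite sum
  set g : ℤ → Matrix (Fin n) (Fin n) ℂ := fun k =>
    (((1 - (k.natAbs : ℝ) / M : ℝ) : ℂ) * c k) • (R k).map (↑· : ℝ → ℂ) with hg
  set g0 : ℤ → Matrix (Fin n) (Fin n) ℂ := fun k =>
    if k ∈ Finset.Icc (-(M : ℤ) + 1) ((M : ℤ) - 1) then g k else 0 with hg0
  have hg0s : Summable g0 :=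
    summable_of_ne_finset_zero (s := Finset.Icc (-(M : ℤ) + 1) ((M : ℤ) - 1))
      (fun k hk => by rw [hg0]; exact if_neg hk)
  have hSsum : ∑ k ∈ Finset.Icc (-(M : ℤ) + 1) ((M : ℤ) - 1),
      (((1 - (k.natAbs : ℝ) / M : ℝ) : ℂ) *
          Complex.exp (-(2 * (Real.pi : ℂ) * (s : ℂ) * (k : ℂ)) * Complex.I)) •
        (R k).map (↑· : ℝ → ℂ) = ∑' k : ℤ, g0 k := by
    rw [tsum_eq_sum (s := Finset.Icc (-(M : ℤ) + 1) ((M : ℤ) - 1))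
      (fun k hk => by rw [hg0]; exact if_neg hk)]
    refine Finset.sum_congr rfl fun k hk => ?_
    rw [hg0]; simp only; rw [if_pos hk, hg]
  -- the difference term
  set T : ℤ → Matrix (Fin n) (Fin n) ℂ := fun k =>
    if k ∈ Finset.Icc (-(M : ℤ) + 1) ((M : ℤ) - 1)
      then (((k.natAbs : ℝ) / M : ℝ) : ℂ) • f k else f k with hT
  have hfT : ∀ k : ℤ, f k - g0 k = T k := by
    intro k
    by_cases hk : k ∈ Finset.Icc (-(M : ℤ) + 1) ((M : ℤ) - 1)
    · rw [hg0, hT]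
      simp only
      rw [if_pos hk, if_pos hk, hg]
      simp only
      rw [hf]
      simp only
      rw [mul_smul]
      rw [show ((((k.natAbs : ℝ) / M : ℝ)) : ℂ) = 1 - ((1 - (k.natAbs : ℝ) / M : ℝ) : ℂ) by
        push_cast; ring]
      rw [sub_smul, one_smul]
    · rw [hg0, hT]
      simp only
      rw [if_neg hk, if_neg hk, sub_zero]
  have hDiff : Phi R s - ∑ k ∈ Finset.Icc (-(M : ℤ) + 1) ((M : ℤ) - 1),
      (((1 - (k.natAbs : ℝ) / M : ℝ) : ℂ) *
          Complex.exp (-(2 * (Real.pi : ℂ) * (s : ℂ) * (k : ℂ)) * Complex.I)) •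
        (R k).map (↑· : ℝ → ℂ) = ∑' k : ℤ, T k := by
    rw [hSsum]
    have hPhi : Phi R s = ∑' k : ℤ, f k := rfl
    rw [hPhi, ← Summable.tsum_sub hfs hg0s]
    exact tsum_congr hfT
  -- bound on ‖T k‖
  have hTb : ∀ k : ℤ, ‖T k‖ ≤ b1 k + b2 k := by
    intro k
    by_cases hk : k ∈ Finset.Icc (-(M : ℤ) + 1) ((M : ℤ) - 1)
    · have habs : k.natAbs < M := by
        rw [Finset.mem_Icc] at hk
        omega
      have hb2z : b2 k = 0 := by
        rw [hb2, hF2]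
        simp only
        rw [if_neg (by omega)]
      rw [hT]; simp only
      rw [if_pos hk, norm_smul, hb2z, add_zero, hb1]
      simp only [Complex.norm_real, Real.norm_eq_abs,
        abs_of_nonneg (by positivity : (0:ℝ) ≤ (k.natAbs : ℝ) / M)]
      calc (k.natAbs : ℝ) / M * ‖f k‖ ≤ (k.natAbs : ℝ) / M * (γ * ρ ^ k.natAbs) := by
            apply mul_le_mul_of_nonneg_left (hfb k) (by positivity)
        _ = γ / M * ((k.natAbs : ℝ) * ρ ^ k.natAbs) := by ring
    · have habs : M ≤ k.natAbs := by
        rw [Finset.mem_Icc] at hk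
        omega
      have hb2v : b2 k = γ * ρ ^ k.natAbs := by
        rw [hb2, hF2]
        simp only
        rw [if_pos habs]
      rw [hT]; simp only
      rw [if_neg hk, hb2v]
      have hb1n : 0 ≤ b1 k := by rw [hb1]; positivity
      linarith [hfb k]
  have hTs : Summable (fun k : ℤ => ‖T k‖) :=
    Summable.of_nonneg_of_le (fun k => norm_nonneg _) hTb Sb.summable
  -- put everything together
  rw [show spec2 (Phi R s - ∑ k ∈ Finset.Icc (-(M : ℤ) + 1) ((M : ℤ) - 1),
      (((1 - (k.natAbs : ℝ) / M : ℝ) : ℂ) *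
          Complex.exp (-(2 * (Real.pi : ℂ) * (s : ℂ) * (k : ℂ)) * Complex.I)) •
        (R k).map (↑· : ℝ → ℂ)) = ‖Phi R s - ∑ k ∈ Finset.Icc (-(M : ℤ) + 1) ((M : ℤ) - 1),
      (((1 - (k.natAbs : ℝ) / M : ℝ) : ℂ) *
          Complex.exp (-(2 * (Real.pi : ℂ) * (s : ℂ) * (k : ℂ)) * Complex.I)) •
        (R k).map (↑· : ℝ → ℂ)‖ from rfl, hDiff]
  calc ‖∑' k : ℤ, T k‖ ≤ ∑' k : ℤ, ‖T k‖ := norm_tsum_le_tsum_norm hTs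
    _ ≤ (γ / M) * (ρ / (1 - ρ) ^ 2 + ρ / (1 - ρ) ^ 2) +
        (γ * ρ ^ M * (1 - ρ)⁻¹ + γ * ρ ^ M * (1 - ρ)⁻¹) := by
        have h := Summable.tsum_le_tsum hTb hTs Sb.summable
        rwa [Sb.tsum_eq] at h
    _ ≤ 2 * γ * ρ / ((1 - ρ) ^ 2 * M) +
        2 * γ * (ρ ^ 2 / (1 - ρ) ^ 2 + 1 / (1 - ρ)) * ρ ^ M := by
        have e1 : (γ / M) * (ρ / (1 - ρ) ^ 2 + ρ / (1 - ρ) ^ 2) =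
            2 * γ * ρ / ((1 - ρ) ^ 2 * M) := by
          field_simp
          ring
        have e2 : 2 * γ * (ρ ^ 2 / (1 - ρ) ^ 2 + 1 / (1 - ρ)) * ρ ^ M =
            2 * (γ * (ρ ^ 2 / (1 - ρ) ^ 2) * ρ ^ M) + 2 * (γ * ρ ^ M * (1 - ρ)⁻¹) := by
          field_simp
        have e3 : (0:ℝ) ≤ γ * (ρ ^ 2 / (1 - ρ) ^ 2) * ρ ^ M := by positivity
        rw [e1]
        linarith
end

section
/- (Bias of the Welch estimator.) Let M ≥ 1 be an integer and let v ∈ ℝ^M have nonnegative entries v[0], …, v[M−1] with v ≠ 0. Define b : ℤ → ℝ by b[k] = (Σ_{i=|k|}^{M−1} v[i−|k|] v[i]) / ‖v‖₂² for |k| < M and b[k] = 0 for |k| ≥ M. Let ε > 0 and let M̂ ∈ ℕ satisfy Σ_{|k| ≥ M̂} ‖R[k]‖₂ ≤ ε/2. If M ≥ M̂ and b[k] ≥ 1 − ε/(2‖R‖₁) for all |k| < M̂, then sup_{s∈[−1/2,1/2]} ‖Φ(s) − Σ_{k=−M+1}^{M−1} e^{−j2πsk} b[k] R[k]‖₂ ≤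 ε. -/
open scoped Matrix.Norms.L2Operator

lemma spec2_map_le {n : ℕ} (A : Matrix (Fin n) (Fin n) ℝ) :
    ‖(A.map (↑· : ℝ → ℂ))‖ ≤ ‖A‖ := by
  rw [Matrix.l2_opNorm_def]
  refine ContinuousLinearMap.opNorm_le_bound _ (norm_nonneg A) fun x => ?_
  set u : EuclideanSpace ℝ (Fin n) := (WithLp.equiv 2 _).symm fun i => (x i).re with hu
  set w : EuclideanSpace ℝ (Fin n) := (WithLp.equiv 2 _).symm fun i => (x i).im with hw
  set T := (Matrix.toEuclideanLin.trans LinearMap.toContinuousLinearMap) (A.map (↑· : ℝ → ℂ))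
  set S := (Matrix.toEuclideanLin.trans LinearMap.toContinuousLinearMap) A
  have hre : ∀ i, (T x i).re = S u i := by
    intro i
    show ((A.map (↑· : ℝ → ℂ)).mulVec (fun j => x j) i).re = A.mulVec (fun j => (x j).re) i
    simp [Matrix.mulVec, dotProduct, Complex.re_sum, Matrix.map_apply]
  have him : ∀ i, (T x i).im = S w i := by
    intro i
    show ((A.map (↑· : ℝ → ℂ)).mulVec (fun j => x j) i).im = A.mulVec (fun j => (x j).im) i
    simp [Matrix.mulVec, dotProduct, Complex.im_sum, Matrix.map_apply]
  have hTsq : ‖T x‖ ^ 2 = ‖S u‖ ^ 2 + ‖S w‖ ^ 2 := by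
    rw [EuclideanSpace.norm_eq, EuclideanSpace.norm_eq, EuclideanSpace.norm_eq,
      Real.sq_sqrt (by positivity), Real.sq_sqrt (by positivity), Real.sq_sqrt (by positivity),
      ← Finset.sum_add_distrib]
    refine Finset.sum_congr rfl fun i _ => ?_
    rw [← hre i, ← him i]
    simp only [Complex.sq_norm, Complex.normSq_apply,
      Real.norm_eq_abs, sq_abs]
    ring
  have hxsq : ‖x‖ ^ 2 = ‖u‖ ^ 2 + ‖w‖ ^ 2 := by
    rw [EuclideanSpace.norm_eq, EuclideanSpace.norm_eq, EuclideanSpace.norm_eq,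
      Real.sq_sqrt (by positivity), Real.sq_sqrt (by positivity), Real.sq_sqrt (by positivity),
      ← Finset.sum_add_distrib]
    refine Finset.sum_congr rfl fun i _ => ?_
    simp only [hu, hw, Complex.sq_norm, Complex.normSq_apply,
      Real.norm_eq_abs, sq_abs]
    have : ((WithLp.equiv 2 (Fin n → ℝ)).symm fun i => (x i).re) i = (x i).re := rfl
    have : ((WithLp.equiv 2 (Fin n → ℝ)).symm fun i => (x i).im) i = (x i).im := rfl
    simp_all
    ring
  have h1 : ‖S u‖ ^ 2 ≤ ‖A‖ ^ 2 * ‖u‖ ^ 2 := by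
    have := S.le_opNorm u
    rw [show ‖S‖ = ‖A‖ from (Matrix.l2_opNorm_def A).symm] at this
    nlinarith [norm_nonneg (S u), norm_nonneg u, norm_nonneg A]
  have h2 : ‖S w‖ ^ 2 ≤ ‖A‖ ^ 2 * ‖w‖ ^ 2 := by
    have := S.le_opNorm w
    rw [show ‖S‖ = ‖A‖ from (Matrix.l2_opNorm_def A).symm] at this
    nlinarith [norm_nonneg (S w), norm_nonneg w, norm_nonneg A]
  have hsq : ‖T x‖ ^ 2 ≤ (‖A‖ * ‖x‖) ^ 2 := by
    rw [hTsq, mul_pow, hxsq]; linarith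
  exact (pow_le_pow_iff_left₀ (norm_nonneg _) (by positivity) two_ne_zero).mp hsq

lemma b_bounds {M : ℕ} (v : Fin M → ℝ) (hv : ∀ i, 0 ≤ v i) (hvne : v ≠ 0) (a : ℕ) :
    0 ≤ (∑ i : Fin M, if a ≤ i.val then
            v ⟨i.val - a, lt_of_le_of_lt (Nat.sub_le _ _) i.isLt⟩ * v i
          else 0) / (∑ i : Fin M, v i ^ 2) ∧
    (∑ i : Fin M, if a ≤ i.val then
            v ⟨i.val - a, lt_of_le_of_lt (Nat.sub_le _ _) i.isLt⟩ * v i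
          else 0) / (∑ i : Fin M, v i ^ 2) ≤ 1 := by
  set S := ∑ i : Fin M, v i ^ 2 with hS
  have hSpos : 0 < S := by
    obtain ⟨i, hi⟩ := Function.ne_iff.mp hvne
    refine Finset.sum_pos' (fun j _ => sq_nonneg _) ⟨i, Finset.mem_univ i, ?_⟩
    have : v i ≠ 0 := hi
    positivity
  set f : Fin M → ℝ := fun i => if a ≤ i.val then
      v ⟨i.val - a, lt_of_le_of_lt (Nat.sub_le _ _) i.isLt⟩ else 0 with hf
  have hterm : ∀ i : Fin M, (if a ≤ i.val then
      v ⟨i.val - a, lt_of_le_of_lt (Nat.sub_le _ _) i.isLt⟩ * v i else 0) = f i * v i := by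
    intro i; by_cases h : a ≤ i.val <;> simp [hf, h]
  have hNnn : 0 ≤ ∑ i : Fin M, f i * v i := by
    refine Finset.sum_nonneg fun i _ => ?_
    by_cases h : a ≤ i.val <;> simp [hf, h]
    exact mul_nonneg (hv _) (hv _)
  have hfsq : (∑ i : Fin M, f i ^ 2) ≤ S := by
    have h1 : (∑ i : Fin M, f i ^ 2)
        = ∑ i ∈ Finset.univ.filter (fun i : Fin M => a ≤ i.val),
            v ⟨i.val - a, lt_of_le_of_lt (Nat.sub_le _ _) i.isLt⟩ ^ 2 := by
      rw [Finset.sum_filter]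
      refine Finset.sum_congr rfl fun i _ => ?_
      by_cases h : a ≤ i.val <;> simp [hf, h]
    rw [h1]
    have h2 : ∑ i ∈ Finset.univ.filter (fun i : Fin M => a ≤ i.val),
          v ⟨i.val - a, lt_of_le_of_lt (Nat.sub_le _ _) i.isLt⟩ ^ 2
        = ∑ j ∈ (Finset.univ.filter (fun i : Fin M => a ≤ i.val)).image
            (fun i : Fin M => (⟨i.val - a, lt_of_le_of_lt (Nat.sub_le _ _) i.isLt⟩ : Fin M)),
            v j ^ 2 := by
      rw [Finset.sum_image]
      intro x hx y hy hxy
      simp only [Finset.mem_coe, Finset.mem_filter] at hx hy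
      have := congrArg Fin.val hxy
      simp only at this
      exact Fin.ext (by omega)
    rw [h2]
    exact Finset.sum_le_sum_of_subset_of_nonneg (Finset.subset_univ _)
      (fun j _ _ => sq_nonneg _)
  have hCS := Finset.sum_mul_sq_le_sq_mul_sq Finset.univ f v
  have hN : (∑ i : Fin M, f i * v i) ≤ S := by
    nlinarith [hNnn, hSpos, hfsq, hCS]
  constructor
  · simp only [hterm]
    exact div_nonneg hNnn hSpos.le
  · simp only [hterm]
    exact (div_le_one hSpos).mpr hN

theorem bias_welch {n : ℕ} (hn : 1 ≤ n)
    (R : ℤ → Matrix (Fin n) (Fin n) ℝ)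
    (hsum : Summable fun k : ℤ => spec2 (R k))
    (hRpos : 0 < ∑' k : ℤ, spec2 (R k))
    (M : ℕ) (hM : 1 ≤ M)
    (v : Fin M → ℝ) (hv : ∀ i, 0 ≤ v i) (hvne : v ≠ 0)
    (b : ℤ → ℝ)
    (hbdef : ∀ k : ℤ, b k =
      if k.natAbs < M then
        (∑ i : Fin M, if k.natAbs ≤ i.val then
            v ⟨i.val - k.natAbs, lt_of_le_of_lt (Nat.sub_le _ _) i.isLt⟩ * v i
          else 0) / (∑ i : Fin M, v i ^ 2)
      else 0)
    (ε : ℝ) (hε : 0 < ε) (Mhat : ℕ)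
    (hMhat : ∑' k : {k : ℤ // Mhat ≤ k.natAbs}, spec2 (R k.val) ≤ ε / 2)
    (hMMhat : M ≥ Mhat)
    (hblarge : ∀ k : ℤ, k.natAbs < Mhat →
      b k ≥ 1 - ε / (2 * ∑' k : ℤ, spec2 (R k))) :
    ∀ s ∈ Set.Icc (-(1:ℝ)/2) (1/2),
      spec2 (Phi R s -
        ∑ k ∈ Finset.Icc (-(M : ℤ) + 1) ((M : ℤ) - 1),
          ((b k : ℂ) *
              Complex.exp (-(2 * (Real.pi : ℂ) * (s : ℂ) * (k : ℂ)) * Complex.I)) •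
            (R k).map (↑· : ℝ → ℂ)) ≤ ε := by
  intro s _
  have hb01 : ∀ k : ℤ, 0 ≤ b k ∧ b k ≤ 1 := by
    intro k; rw [hbdef k]
    split
    · exact b_bounds v hv hvne k.natAbs
    · exact ⟨le_rfl, zero_le_one⟩
  set Srt := ∑' k : ℤ, spec2 (R k) with hSrt
  set δ := ε / (2 * Srt) with hδ
  have hδ0 : 0 ≤ δ := div_nonneg hε.le (by linarith)
  set e : ℤ → ℂ := fun k =>
    Complex.exp (-(2 * (Real.pi : ℂ) * (s : ℂ) * (k : ℂ)) * Complex.I) with he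
  have hnorme : ∀ k : ℤ, ‖e k‖ = 1 := by
    intro k
    rw [he]
    simp only
    rw [Complex.norm_exp]
    norm_num [Complex.mul_re, Complex.mul_im]
  set F : Finset ℤ := Finset.Icc (-(M:ℤ)+1) ((M:ℤ)-1) with hF
  have hFmem : ∀ k : ℤ, k ∈ F ↔ k.natAbs < M := by
    intro k; simp only [hF, Finset.mem_Icc]; omega
  set A : ℤ → Matrix (Fin n) (Fin n) ℂ := fun k => (R k).map (↑· : ℝ → ℂ) with hA
  have hspec_nonneg : ∀ k : ℤ, 0 ≤ spec2 (R k) := fun k => norm_nonneg (R k)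
  have hspecA : ∀ k : ℤ, ‖A k‖ ≤ spec2 (R k) := fun k => spec2_map_le (R k)
  set f : ℤ → Matrix (Fin n) (Fin n) ℂ := fun k => e k • A k with hf
  set g : ℤ → Matrix (Fin n) (Fin n) ℂ :=
    fun k => if k ∈ F then ((b k : ℂ) * e k) • A k else 0 with hg
  have hnormf : ∀ k : ℤ, ‖f k‖ = ‖A k‖ := by
    intro k; rw [hf]; simp only
    rw [norm_smul, hnorme k, one_mul]
  have hfsum : Summable f := by
    refine Summable.of_norm (Summable.of_nonneg_of_le (fun k => norm_nonneg _) ?_ hsum)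
    intro k; rw [hnormf k]; exact hspecA k
  have hgsum : Summable g := summable_of_ne_finset_zero (s := F) fun k hk => if_neg hk
  -- the deviation scalar bound
  have hdev : ∀ k : ℤ, k ∈ F → ‖f k - g k‖ = |1 - b k| * ‖A k‖ := by
    intro k hk
    have : f k - g k = ((1 - (b k : ℂ)) * e k) • A k := by
      rw [hf, hg]; simp only [if_pos hk]
      rw [← sub_smul]; congr 1; ring
    rw [this, norm_smul, norm_mul, hnorme k, mul_one]
    congr 1
    rw [show (1 - (b k : ℂ)) = ((1 - b k : ℝ) : ℂ) by push_cast; ring]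
    rw [Complex.norm_real, Real.norm_eq_abs]
  set w1 : ℤ → ℝ := fun k => if k.natAbs < Mhat then δ * spec2 (R k) else 0 with hw1
  set w2 : ℤ → ℝ := fun k => if Mhat ≤ k.natAbs then spec2 (R k) else 0 with hw2
  have hw1sum : Summable w1 := by
    refine Summable.of_nonneg_of_le (fun k => ?_) (fun k => ?_) (hsum.mul_left δ)
    · rw [hw1]; dsimp only; split
      · exact mul_nonneg hδ0 (hspec_nonneg k)
      · exact le_rfl
    · rw [hw1]; dsimp only; split
      · exact le_rfl
      · exact mul_nonneg hδ0 (hspec_nonneg k)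
  have hw2sum : Summable w2 := by
    refine Summable.of_nonneg_of_le (fun k => ?_) (fun k => ?_) hsum
    · rw [hw2]; dsimp only; split
      · exact hspec_nonneg k
      · exact le_rfl
    · rw [hw2]; dsimp only; split
      · exact le_rfl
      · exact hspec_nonneg k
  have hwsum : Summable (fun k => w1 k + w2 k) := hw1sum.add hw2sum
  have hpw : ∀ k : ℤ, ‖f k - g k‖ ≤ w1 k + w2 k := by
    intro k
    by_cases h1 : k.natAbs < Mhat
    · have hkF : k ∈ F := (hFmem k).mpr (lt_of_lt_of_le h1 hMMhat)
      rw [hdev k hkF, hw1, hw2]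
      simp only [if_pos h1, if_neg (by omega : ¬ Mhat ≤ k.natAbs), add_zero]
      have hble := hblarge k h1
      have hb1 := (hb01 k).2
      have habs : |1 - b k| ≤ δ := by
        rw [abs_of_nonneg (by linarith)]
        rw [hδ, hSrt]; linarith [hble]
      exact mul_le_mul habs (hspecA k) (norm_nonneg _) hδ0
    · rw [hw1, hw2]
      simp only [if_neg h1, if_pos (by omega : Mhat ≤ k.natAbs), zero_add]
      by_cases hkF : k ∈ F
      · rw [hdev k hkF]
        have habs : |1 - b k| ≤ 1 := by
          rw [abs_le]; constructor <;> [linarith [(hb01 k).2]; linarith [(hb01 k).1]]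
        calc |1 - b k| * ‖A k‖ ≤ 1 * spec2 (R k) :=
              mul_le_mul habs (hspecA k) (norm_nonneg _) zero_le_one
          _ = spec2 (R k) := one_mul _
      · rw [hg]; simp only [if_neg hkF, sub_zero]
        rw [hnormf k]; exact hspecA k
  have hfgnorm : Summable (fun k => ‖f k - g k‖) :=
    Summable.of_nonneg_of_le (fun k => norm_nonneg _) hpw hwsum
  -- rewrite the target difference as a tsum
  have h2 : (∑ k ∈ F,
      ((b k : ℂ) *
          Complex.exp (-(2 * (Real.pi : ℂ) * (s : ℂ) * (k : ℂ)) * Complex.I)) •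
        (R k).map (↑· : ℝ → ℂ)) = ∑' k, g k := by
    rw [tsum_eq_sum (s := F) (fun k hk => if_neg hk)]
    exact Finset.sum_congr rfl fun k hk => (if_pos hk).symm
  have hPhi : Phi R s = ∑' k, f k := by
    simp only [hf, he, hA]; rfl
  have hkey : Phi R s -
      (∑ k ∈ F,
        ((b k : ℂ) *
            Complex.exp (-(2 * (Real.pi : ℂ) * (s : ℂ) * (k : ℂ)) * Complex.I)) •
          (R k).map (↑· : ℝ → ℂ)) = ∑' k, (f k - g k) := by
    rw [h2, hPhi, ← Summable.tsum_sub hfsum hgsum]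
  have hSrtne : Srt ≠ 0 := ne_of_gt hRpos
  have hδSrt : δ * Srt = ε / 2 := by
    rw [hδ]; field_simp
  have hw1bound : ∑' k, w1 k ≤ ε / 2 := by
    have h := Summable.tsum_le_tsum (f := w1) (g := fun k => δ * spec2 (R k))
      (fun k => by
        rw [hw1]; dsimp only; split
        · exact le_rfl
        · exact mul_nonneg hδ0 (hspec_nonneg k)) hw1sum (hsum.mul_left δ)
    rw [tsum_mul_left] at h
    rw [← hδSrt]
    exact h
  have hw2bound : ∑' k, w2 k ≤ ε / 2 := by
    have hind : w2 = Set.indicator {k : ℤ | Mhat ≤ k.natAbs} (fun k => spec2 (R k)) := by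
      funext k
      rw [hw2, Set.indicator_apply]
      simp only [Set.mem_setOf_eq]
    rw [hind, ← tsum_subtype]
    exact hMhat
  calc spec2 (Phi R s -
      ∑ k ∈ F,
        ((b k : ℂ) *
            Complex.exp (-(2 * (Real.pi : ℂ) * (s : ℂ) * (k : ℂ)) * Complex.I)) •
          (R k).map (↑· : ℝ → ℂ))
      = spec2 (∑' k, (f k - g k)) := by rw [hkey]
    _ = ‖∑' k, (f k - g k)‖ := rfl
    _ ≤ ∑' k, ‖f k - g k‖ := norm_tsum_le_tsum_norm hfgnorm
    _ ≤ ∑' k, (w1 k + w2 k) := Summable.tsum_le_tsum hpw hfgnorm hwsum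
    _ = (∑' k, w1 k) + ∑' k, w2 k := Summable.tsum_add hw1sum hw2sum
    _ ≤ ε / 2 + ε / 2 := add_le_add hw1bound hw2bound
    _ = ε := by ring
end

section
/- (Norm bounds for the Welch matrix.) Let S, K, M be positive integers, let N = (S−1)K + M, and let v ∈ ℝ^M be a unit vector (‖v‖₂ = 1). For i = 0, …, S−1 let u_i ∈ ℝ^N be the vector with entries u_i[iK + j] = v[j] for j = 0, …, M−1 and all other entries zero, and set A = (1/S) Σ_{i=0}^{S−1} u_i u_iᵀ ∈ ℝ^{N×N}. Then ‖A‖₂ ≤ ⌈M/K⌉ / S and ‖A‖_F² ≤ (S + 2(S−1)(⌈M/K⌉ − 1)) / S². -/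
/-- The Frobenius norm of a matrix. -/
noncomputable def frob2 {𝕜 m n : Type*} [RCLike 𝕜] [Fintype m] [Fintype n]
    (M : Matrix m n 𝕜) : ℝ :=
  Real.sqrt (∑ i, ∑ j, ‖M i j‖ ^ 2)

section Helpers

variable {S K M N : ℕ}

lemma welch_win_lt (hN : N = (S - 1) * K + M) (hM : 1 ≤ M) (i : Fin S) (j : Fin M) :
    i.val * K + j.val < N := by
  have h1 : i.val ≤ S - 1 := by have := i.isLt; omega
  have h2 : i.val * K ≤ (S - 1) * K := Nat.mul_le_mul_right _ h1
  have := j.isLt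
  omega

/-- Sum over `Fin N` of a function vanishing off the `i`-th window equals the sum
over the window. -/
lemma welch_sum_win (hN : N = (S - 1) * K + M) (hM : 1 ≤ M) (i : Fin S) (F : Fin N → ℝ)
    (hF : ∀ p : Fin N, ¬(i.val * K ≤ p.val ∧ p.val < i.val * K + M) → F p = 0) :
    ∑ p : Fin N, F p = ∑ j : Fin M, F ⟨i.val * K + j.val, welch_win_lt hN hM i j⟩ := by
  classical
  have hinj : ∀ a ∈ (Finset.univ : Finset (Fin M)), ∀ b ∈ Finset.univ,
      (⟨i.val * K + a.val, welch_win_lt hN hM i a⟩ : Fin N) = ⟨i.val * K + b.val, welch_win_lt hN hM i b⟩ → a = b := by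
    intro a _ b _ hab
    simp only [Fin.mk.injEq] at hab
    exact Fin.ext (by omega)
  calc ∑ p : Fin N, F p
      = ∑ p ∈ Finset.image (fun j : Fin M => (⟨i.val * K + j.val, welch_win_lt hN hM i j⟩ : Fin N)) Finset.univ, F p := by
        symm
        apply Finset.sum_subset (Finset.subset_univ _)
        intro p _ hp
        apply hF
        intro hcond
        apply hp
        rw [Finset.mem_image]
        refine ⟨⟨p.val - i.val * K, by omega⟩, Finset.mem_univ _, ?_⟩
        exact Fin.ext (by simp; omega)
    _ = ∑ j : Fin M, F ⟨i.val * K + j.val, welch_win_lt hN hM i j⟩ := Finset.sum_image hinj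

/-- Each coordinate lies in at most `T` windows. -/
lemma welch_count_win {T : ℕ} (hK : 1 ≤ K) (hTK : M ≤ T * K) (p : ℕ) :
    ((Finset.univ : Finset (Fin S)).filter
      (fun i => i.val * K ≤ p ∧ p < i.val * K + M)).card ≤ T := by
  classical
  set s := (Finset.univ : Finset (Fin S)).filter
      (fun i => i.val * K ≤ p ∧ p < i.val * K + M) with hs
  by_cases hne : s.Nonempty
  · have hmem := s.min'_mem hne
    set i₀ := s.min' hne with hi₀
    rw [hs, Finset.mem_filter] at hmem
    obtain ⟨-, h₀le, h₀lt⟩ := hmem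
    have hmaps : ∀ i ∈ s, i.val - i₀.val ∈ Finset.range T := by
      intro i hi
      have hmin : i₀ ≤ i := Finset.min'_le _ _ hi
      rw [hs, Finset.mem_filter] at hi
      obtain ⟨-, hile, -⟩ := hi
      rw [Finset.mem_range]
      set d := i.val - i₀.val with hd
      have hiv : i.val = i₀.val + d := by
        have : i₀.val ≤ i.val := hmin
        omega
      have hexp : (i₀.val + d) * K = i₀.val * K + d * K := add_mul _ _ _
      have h1 : i₀.val * K + d * K ≤ p := by rw [← hexp, ← hiv]; exact hile
      have h2 : d * K < M := by omega
      by_contra hcon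
      push_neg at hcon
      have : T * K ≤ d * K := Nat.mul_le_mul_right _ hcon
      omega
    have hinj : Set.InjOn (fun i : Fin S => i.val - i₀.val) s := by
      intro i hi j hj hij
      have hij' : i.val - i₀.val = j.val - i₀.val := hij
      simp only [Finset.mem_coe] at hi hj
      have h1 : i₀ ≤ i := Finset.min'_le _ _ hi
      have h2 : i₀ ≤ j := Finset.min'_le _ _ hj
      have h1' : i₀.val ≤ i.val := h1
      have h2' : i₀.val ≤ j.val := h2
      exact Fin.ext (by omega)
    simpa using Finset.card_le_card_of_injOn (fun i : Fin S => i.val - i₀.val) hmaps hinj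
  · rw [Finset.not_nonempty_iff_eq_empty] at hne
    simp [hne]

end Helpers

theorem welch_matrix_norms (S K M N : ℕ) (hS : 1 ≤ S) (hK : 1 ≤ K) (hM : 1 ≤ M)
    (hN : N = (S - 1) * K + M)
    (v : Fin M → ℝ) (hv : Real.sqrt (∑ i, v i ^ 2) = 1)
    (u : Fin S → Fin N → ℝ)
    (hu : ∀ (i : Fin S) (p : Fin N), u i p =
      if h : i.val * K ≤ p.val ∧ p.val < i.val * K + M then
        v ⟨p.val - i.val * K, by omega⟩ else 0)
    (A : Matrix (Fin N) (Fin N) ℝ)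
    (hA : A = (S : ℝ)⁻¹ • ∑ i : Fin S, Matrix.of fun p q => u i p * u i q) :
    spec2 A ≤ ((⌈(M : ℝ) / (K : ℝ)⌉ : ℤ) : ℝ) / S ∧
      frob2 A ^ 2 ≤
        ((S : ℝ) + 2 * ((S : ℝ) - 1) * (((⌈(M : ℝ) / (K : ℝ)⌉ : ℤ) : ℝ) - 1)) / (S : ℝ) ^ 2 := by
  classical
  set T : ℕ := (M + K - 1) / K with hT
  -- basic arithmetic facts about T
  have hdm0 := Nat.div_add_mod (M + K - 1) K
  have hmlt0 : (M + K - 1) % K < K := Nat.mod_lt _ (by omega)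
  obtain ⟨r, hr, hdm⟩ : ∃ r, r < K ∧ K * T + r = M + K - 1 := ⟨_, hmlt0, hdm0⟩
  have hcomm : K * T = T * K := Nat.mul_comm _ _
  have hTK : M ≤ T * K := by omega
  have hT1 : 1 ≤ T := by
    rcases Nat.eq_zero_or_pos T with h | h
    · rw [h] at hTK; simp at hTK; omega
    · exact h
  have hTK' : (T - 1) * K < M := by
    have h : T - 1 + 1 = T := by omega
    have hexp : (T - 1) * K + K = T * K := by
      calc (T - 1) * K + K = (T - 1 + 1) * K := by ring
      _ = T * K := by rw [h]
    omega
  have hKpos : (0:ℝ) < (K:ℝ) := by exact_mod_cast hK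
  have hSpos : (0:ℝ) < (S:ℝ) := by exact_mod_cast hS
  have hceil : ((⌈(M : ℝ) / (K : ℝ)⌉ : ℤ) : ℝ) = (T : ℝ) := by
    have hc : ⌈(M : ℝ) / (K : ℝ)⌉ = (T : ℤ) := by
      rw [Int.ceil_eq_iff]
      constructor
      · rw [lt_div_iff₀ hKpos]
        push_cast
        have h2 : (((T - 1 : ℕ)) : ℝ) * (K : ℝ) < (M : ℝ) := by exact_mod_cast hTK'
        push_cast [Nat.cast_sub hT1] at h2
        linarith
      · rw [div_le_iff₀ hKpos]
        push_cast
        exact_mod_cast hTK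
    rw [hc]; simp
  -- unit norm facts
  have hv2 : ∑ i : Fin M, v i ^ 2 = 1 := by
    have h0 : 0 ≤ ∑ i : Fin M, v i ^ 2 := Finset.sum_nonneg fun i _ => sq_nonneg _
    have h1 := Real.sq_sqrt h0
    rw [hv] at h1
    linarith
  have huv : ∀ (i : Fin S) (j : Fin M),
      u i ⟨i.val * K + j.val, welch_win_lt hN hM i j⟩ = v j := by
    intro i j
    rw [hu, dif_pos ⟨Nat.le_add_right _ _, Nat.add_lt_add_left j.isLt _⟩]
    congr 1
    exact Fin.ext (by simp)
  have husq : ∀ i : Fin S, ∑ p : Fin N, (u i p) ^ 2 = 1 := by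
    intro i
    rw [welch_sum_win hN hM i (fun p => (u i p) ^ 2)
      (fun p hp => by show u i p ^ 2 = 0; rw [hu, dif_neg hp]; ring)]
    rw [← hv2]
    exact Finset.sum_congr rfl fun j _ => by rw [huv]
  -- the key quadratic form bound
  have hquad : ∀ x : Fin N → ℝ,
      ∑ i : Fin S, (∑ p : Fin N, u i p * x p) ^ 2 ≤ (T : ℝ) * ∑ p : Fin N, (x p) ^ 2 := by
    intro x
    have hterm : ∀ i : Fin S, (∑ p : Fin N, u i p * x p) ^ 2 ≤
        ∑ p : Fin N, (if i.val * K ≤ p.val ∧ p.val < i.val * K + M then (x p) ^ 2 else 0) := by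
      intro i
      have hcs := Finset.sum_mul_sq_le_sq_mul_sq Finset.univ (fun p => u i p)
        (fun p : Fin N => if i.val * K ≤ p.val ∧ p.val < i.val * K + M then x p else 0)
      have he1 : (∑ p : Fin N, u i p *
          (if i.val * K ≤ p.val ∧ p.val < i.val * K + M then x p else 0))
          = ∑ p : Fin N, u i p * x p := by
        refine Finset.sum_congr rfl fun p _ => ?_
        by_cases hw : i.val * K ≤ p.val ∧ p.val < i.val * K + M
        · rw [if_pos hw]
        · rw [if_neg hw, hu, dif_neg hw]; ring
      have he2 : ∀ p : Fin N,
          (if i.val * K ≤ p.val ∧ p.val < i.val * K + M then x p else 0) ^ 2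
            = (if i.val * K ≤ p.val ∧ p.val < i.val * K + M then (x p) ^ 2 else 0) := by
        intro p; split <;> simp
      rw [he1] at hcs
      calc (∑ p : Fin N, u i p * x p) ^ 2
          ≤ (∑ p : Fin N, (u i p) ^ 2) * ∑ p : Fin N,
              (if i.val * K ≤ p.val ∧ p.val < i.val * K + M then x p else 0) ^ 2 := hcs
        _ = ∑ p : Fin N, (if i.val * K ≤ p.val ∧ p.val < i.val * K + M then (x p) ^ 2 else 0) := by
            rw [husq i, one_mul]
            exact Finset.sum_congr rfl fun p _ => he2 p
    calc ∑ i : Fin S, (∑ p : Fin N, u i p * x p) ^ 2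
        ≤ ∑ i : Fin S, ∑ p : Fin N,
            (if i.val * K ≤ p.val ∧ p.val < i.val * K + M then (x p) ^ 2 else 0) :=
          Finset.sum_le_sum fun i _ => hterm i
      _ = ∑ p : Fin N, ∑ i : Fin S,
            (if i.val * K ≤ p.val ∧ p.val < i.val * K + M then (x p) ^ 2 else 0) :=
          Finset.sum_comm
      _ ≤ ∑ p : Fin N, (T : ℝ) * (x p) ^ 2 := by
          refine Finset.sum_le_sum fun p _ => ?_
          calc ∑ i : Fin S, (if i.val * K ≤ p.val ∧ p.val < i.val * K + M then (x p) ^ 2 else 0)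
              = (∑ i : Fin S,
                  (if i.val * K ≤ p.val ∧ p.val < i.val * K + M then (1:ℝ) else 0)) * (x p) ^ 2 := by
                rw [Finset.sum_mul]
                exact Finset.sum_congr rfl fun i _ => by split <;> simp
            _ = (((Finset.univ : Finset (Fin S)).filter
                  (fun i => i.val * K ≤ p.val ∧ p.val < i.val * K + M)).card : ℝ) * (x p) ^ 2 := by
                rw [Finset.sum_boole]
            _ ≤ (T : ℝ) * (x p) ^ 2 := by
                have hcw : (((Finset.univ : Finset (Fin S)).filter
                    (fun i => i.val * K ≤ p.val ∧ p.val < i.val * K + M)).card : ℝ) ≤ (T : ℝ) := by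
                  exact_mod_cast welch_count_win (S := S) hK hTK p.val
                exact mul_le_mul_of_nonneg_right hcw (sq_nonneg _)
      _ = (T : ℝ) * ∑ p : Fin N, (x p) ^ 2 := (Finset.mul_sum _ _ _).symm
  -- entries of A, and A *ᵥ x
  have hApq : ∀ p q : Fin N, A p q = (S : ℝ)⁻¹ * ∑ i : Fin S, u i p * u i q := by
    intro p q
    rw [hA]
    simp [Matrix.sum_apply]
  have hmul : ∀ x : Fin N → ℝ, ∀ p : Fin N,
      A.mulVec x p = (S : ℝ)⁻¹ * ∑ i : Fin S, (∑ q : Fin N, u i q * x q) * u i p := by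
    intro x p
    simp only [Matrix.mulVec, dotProduct]
    calc ∑ q : Fin N, A p q * x q
        = ∑ q : Fin N, ∑ i : Fin S, (S : ℝ)⁻¹ * (u i p * u i q * x q) := by
          refine Finset.sum_congr rfl fun q _ => ?_
          rw [hApq, Finset.mul_sum, Finset.sum_mul]
          exact Finset.sum_congr rfl fun i _ => by ring
      _ = ∑ i : Fin S, ∑ q : Fin N, (S : ℝ)⁻¹ * (u i p * u i q * x q) := Finset.sum_comm
      _ = (S : ℝ)⁻¹ * ∑ i : Fin S, (∑ q : Fin N, u i q * x q) * u i p := by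
          rw [Finset.mul_sum]
          refine Finset.sum_congr rfl fun i _ => ?_
          rw [← Finset.mul_sum]
          congr 1
          rw [Finset.sum_mul]
          exact Finset.sum_congr rfl fun q _ => by ring
  -- quadratic bound on A *ᵥ x
  have hAps : ∀ x : Fin N → ℝ,
      ∑ p : Fin N, (A.mulVec x p) ^ 2 ≤ ((T : ℝ) / S) ^ 2 * ∑ p : Fin N, (x p) ^ 2 := by
    intro x
    have hs0 : (0:ℝ) ≤ ∑ p : Fin N, (A.mulVec x p) ^ 2 :=
      Finset.sum_nonneg fun p _ => sq_nonneg _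
    have hskey : ∑ p : Fin N, (A.mulVec x p) ^ 2
        = (S : ℝ)⁻¹ * ∑ i : Fin S, (∑ q : Fin N, u i q * x q) *
            (∑ p : Fin N, u i p * A.mulVec x p) := by
      calc ∑ p : Fin N, (A.mulVec x p) ^ 2
          = ∑ p : Fin N, ((S : ℝ)⁻¹ * ∑ i : Fin S, (∑ q : Fin N, u i q * x q) * u i p)
              * A.mulVec x p := by
            refine Finset.sum_congr rfl fun p _ => ?_
            rw [pow_two, hmul x p]
        _ = ∑ p : Fin N, ∑ i : Fin S, (S : ℝ)⁻¹ *
              ((∑ q : Fin N, u i q * x q) * (u i p * A.mulVec x p)) := by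
            refine Finset.sum_congr rfl fun p _ => ?_
            rw [Finset.mul_sum, Finset.sum_mul]
            exact Finset.sum_congr rfl fun i _ => by ring
        _ = ∑ i : Fin S, ∑ p : Fin N, (S : ℝ)⁻¹ *
              ((∑ q : Fin N, u i q * x q) * (u i p * A.mulVec x p)) := Finset.sum_comm
        _ = (S : ℝ)⁻¹ * ∑ i : Fin S, (∑ q : Fin N, u i q * x q) *
              (∑ p : Fin N, u i p * A.mulVec x p) := by
            rw [Finset.mul_sum]
            refine Finset.sum_congr rfl fun i _ => ?_
            rw [← Finset.mul_sum]
            congr 1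
            rw [Finset.mul_sum]
    have hcs := Finset.sum_mul_sq_le_sq_mul_sq Finset.univ
      (fun i : Fin S => ∑ q : Fin N, u i q * x q)
      (fun i : Fin S => ∑ p : Fin N, u i p * A.mulVec x p)
    have hgb := hquad x
    have hhb := hquad (A.mulVec x)
    have h1 : (∑ i : Fin S, (∑ q : Fin N, u i q * x q) *
          (∑ p : Fin N, u i p * A.mulVec x p)) ^ 2
        ≤ ((T : ℝ) * ∑ p : Fin N, (x p) ^ 2) *
            ((T : ℝ) * ∑ p : Fin N, (A.mulVec x p) ^ 2) := by
      refine le_trans hcs ?_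
      refine mul_le_mul hgb hhb ?_ ?_
      · exact Finset.sum_nonneg fun i _ => sq_nonneg _
      · positivity
    have hsq : (∑ p : Fin N, (A.mulVec x p) ^ 2) ^ 2
        ≤ (((T : ℝ) / S) ^ 2 * ∑ p : Fin N, (x p) ^ 2) * (∑ p : Fin N, (A.mulVec x p) ^ 2) := by
      calc (∑ p : Fin N, (A.mulVec x p) ^ 2) ^ 2
          = ((S : ℝ)⁻¹) ^ 2 * (∑ i : Fin S, (∑ q : Fin N, u i q * x q) *
              (∑ p : Fin N, u i p * A.mulVec x p)) ^ 2 := by rw [hskey, mul_pow]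
        _ ≤ ((S : ℝ)⁻¹) ^ 2 * (((T : ℝ) * ∑ p : Fin N, (x p) ^ 2) *
              ((T : ℝ) * ∑ p : Fin N, (A.mulVec x p) ^ 2)) :=
            mul_le_mul_of_nonneg_left h1 (sq_nonneg _)
        _ = (((T : ℝ) / S) ^ 2 * ∑ p : Fin N, (x p) ^ 2) *
              (∑ p : Fin N, (A.mulVec x p) ^ 2) := by
            rw [div_eq_mul_inv]; ring
    rcases eq_or_lt_of_le hs0 with h0 | h0
    · rw [← h0]; positivity
    · have h2 : (∑ p : Fin N, (A.mulVec x p) ^ 2) * (∑ p : Fin N, (A.mulVec x p) ^ 2)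
          ≤ (((T : ℝ) / S) ^ 2 * ∑ p : Fin N, (x p) ^ 2) * (∑ p : Fin N, (A.mulVec x p) ^ 2) := by
        rw [← pow_two]
        exact hsq
      exact le_of_mul_le_mul_right h2 h0
  -- spectral norm bound
  have hspec : spec2 A ≤ (T : ℝ) / (S : ℝ) := by
    have h0 : spec2 A = ‖((Matrix.toEuclideanLin (𝕜 := ℝ) (m := Fin N)
        (n := Fin N)).trans LinearMap.toContinuousLinearMap) A‖ := rfl
    rw [h0]
    apply ContinuousLinearMap.opNorm_le_bound _ (by positivity)
    intro x
    rw [EuclideanSpace.norm_eq, EuclideanSpace.norm_eq]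
    simp only [Real.norm_eq_abs, sq_abs]
    have hxp : ∀ p : Fin N,
        (((Matrix.toEuclideanLin (𝕜 := ℝ) (m := Fin N)
          (n := Fin N)).trans LinearMap.toContinuousLinearMap) A) x p
          = A.mulVec (fun q => x q) p := fun p => rfl
    rw [show (∑ p : Fin N, ((((Matrix.toEuclideanLin (𝕜 := ℝ) (m := Fin N)
        (n := Fin N)).trans LinearMap.toContinuousLinearMap) A) x p) ^ 2)
        = ∑ p : Fin N, (A.mulVec (fun q => x q) p) ^ 2 from
      Finset.sum_congr rfl fun p _ => by rw [hxp]]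
    have hb := hAps (fun q => x q)
    calc Real.sqrt (∑ p : Fin N, (A.mulVec (fun q => x q) p) ^ 2)
        ≤ Real.sqrt (((T : ℝ) / S) ^ 2 * ∑ p : Fin N, (x p) ^ 2) := Real.sqrt_le_sqrt hb
      _ = (T : ℝ) / S * Real.sqrt (∑ p : Fin N, (x p) ^ 2) := by
          rw [Real.sqrt_mul (sq_nonneg _), Real.sqrt_sq (by positivity)]
  -- Frobenius part
  have hfrob : frob2 A ^ 2 = ∑ p : Fin N, ∑ q : Fin N, (A p q) ^ 2 := by
    unfold frob2
    rw [Real.sq_sqrt (Finset.sum_nonneg fun p _ => Finset.sum_nonneg fun q _ => by positivity)]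
    exact Finset.sum_congr rfl fun p _ => Finset.sum_congr rfl fun q _ => by
      rw [Real.norm_eq_abs, sq_abs]
  have hkey : ∑ p : Fin N, ∑ q : Fin N, (∑ i : Fin S, u i p * u i q) ^ 2
      = ∑ i : Fin S, ∑ j : Fin S, (∑ p : Fin N, u i p * u j p) ^ 2 := by
    calc ∑ p : Fin N, ∑ q : Fin N, (∑ i : Fin S, u i p * u i q) ^ 2
        = ∑ p : Fin N, ∑ q : Fin N, ∑ ij : Fin S × Fin S,
            (u ij.1 p * u ij.2 p) * (u ij.1 q * u ij.2 q) := by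
          refine Finset.sum_congr rfl fun p _ => Finset.sum_congr rfl fun q _ => ?_
          rw [pow_two, Finset.sum_mul_sum, Fintype.sum_prod_type]
          exact Finset.sum_congr rfl fun i _ => Finset.sum_congr rfl fun j _ => by ring
      _ = ∑ pq : Fin N × Fin N, ∑ ij : Fin S × Fin S,
            (u ij.1 pq.1 * u ij.2 pq.1) * (u ij.1 pq.2 * u ij.2 pq.2) :=
          (Fintype.sum_prod_type (f := fun pq : Fin N × Fin N => ∑ ij : Fin S × Fin S,
            (u ij.1 pq.1 * u ij.2 pq.1) * (u ij.1 pq.2 * u ij.2 pq.2))).symm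
      _ = ∑ ij : Fin S × Fin S, ∑ pq : Fin N × Fin N,
            (u ij.1 pq.1 * u ij.2 pq.1) * (u ij.1 pq.2 * u ij.2 pq.2) := Finset.sum_comm
      _ = ∑ i : Fin S, ∑ j : Fin S, ∑ pq : Fin N × Fin N,
            (u i pq.1 * u j pq.1) * (u i pq.2 * u j pq.2) :=
          Fintype.sum_prod_type (f := fun ij : Fin S × Fin S => ∑ pq : Fin N × Fin N,
            (u ij.1 pq.1 * u ij.2 pq.1) * (u ij.1 pq.2 * u ij.2 pq.2))
      _ = ∑ i : Fin S, ∑ j : Fin S, (∑ p : Fin N, u i p * u j p) ^ 2 := by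
          refine Finset.sum_congr rfl fun i _ => Finset.sum_congr rfl fun j _ => ?_
          rw [pow_two, Finset.sum_mul_sum, Fintype.sum_prod_type]
  have hGsq : ∀ i j : Fin S, (∑ p : Fin N, u i p * u j p) ^ 2 ≤ 1 := by
    intro i j
    have hcs := Finset.sum_mul_sq_le_sq_mul_sq Finset.univ (fun p : Fin N => u i p)
      (fun p : Fin N => u j p)
    rw [husq i, husq j, one_mul] at hcs
    exact hcs
  have hGzero : ∀ i j : Fin S, (j.val + T ≤ i.val ∨ i.val + T ≤ j.val) →
      (∑ p : Fin N, u i p * u j p) = 0 := by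
    intro i j hd
    apply Finset.sum_eq_zero
    intro p _
    by_cases h2 : j.val * K ≤ p.val ∧ p.val < j.val * K + M
    · by_cases h1 : i.val * K ≤ p.val ∧ p.val < i.val * K + M
      · exfalso
        rcases hd with hd | hd
        · have hmm := Nat.mul_le_mul_right K hd
          rw [add_mul] at hmm
          linarith [h1.1, h2.2, hTK]
        · have hmm := Nat.mul_le_mul_right K hd
          rw [add_mul] at hmm
          linarith [h2.1, h1.2, hTK]
      · rw [hu, dif_neg h1, zero_mul]
    · rw [hu j, dif_neg h2, mul_zero]
  -- counting pairs
  have hcard : ((Finset.univ : Finset (Fin S × Fin S)).filter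
      (fun q => q.1.val < q.2.val + T ∧ q.2.val < q.1.val + T)).card
      ≤ S + (S - 1) * (T - 1) + (S - 1) * (T - 1) := by
    have hsub : ((Finset.univ : Finset (Fin S × Fin S)).filter
        (fun q => q.1.val < q.2.val + T ∧ q.2.val < q.1.val + T))
        ⊆ ((Finset.univ.filter fun q : Fin S × Fin S => q.1 = q.2)
          ∪ (Finset.univ.filter fun q : Fin S × Fin S =>
              q.1.val < q.2.val ∧ q.2.val < q.1.val + T))
          ∪ (Finset.univ.filter fun q : Fin S × Fin S =>
              q.2.val < q.1.val ∧ q.1.val < q.2.val + T) := by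
      intro q hq
      simp only [Finset.mem_filter, Finset.mem_union, Finset.mem_univ, true_and] at hq ⊢
      rcases lt_trichotomy q.1.val q.2.val with h | h | h
      · exact Or.inl (Or.inr ⟨h, hq.2⟩)
      · exact Or.inl (Or.inl (Fin.ext h))
      · exact Or.inr ⟨h, hq.1⟩
    have hD : (Finset.univ.filter fun q : Fin S × Fin S => q.1 = q.2).card ≤ S := by
      have hc := Finset.card_le_card_of_injOn
        (s := Finset.univ.filter fun q : Fin S × Fin S => q.1 = q.2)
        (t := (Finset.univ : Finset (Fin S)))
        (fun q : Fin S × Fin S => q.1) (fun a _ => Finset.mem_univ _) ?_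
      · simpa using hc
      · intro a ha b hb hab
        have hab' : a.1 = b.1 := hab
        simp only [Finset.mem_coe, Finset.mem_filter] at ha hb
        exact Prod.ext hab' (by rw [← ha.2, ← hb.2, hab'])
    have hL : (Finset.univ.filter fun q : Fin S × Fin S =>
        q.1.val < q.2.val ∧ q.2.val < q.1.val + T).card ≤ (S - 1) * (T - 1) := by
      have hc := Finset.card_le_card_of_injOn
        (s := Finset.univ.filter fun q : Fin S × Fin S =>
          q.1.val < q.2.val ∧ q.2.val < q.1.val + T)
        (t := Finset.range (S - 1) ×ˢ Finset.range (T - 1))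
        (fun q : Fin S × Fin S => (q.1.val, q.2.val - q.1.val - 1)) ?_ ?_
      · simpa using hc
      · intro q hq
        simp only [Finset.mem_coe, Finset.mem_filter, Finset.mem_univ, true_and] at hq
        have h2 := q.2.isLt
        have hg1 : q.1.val < S - 1 := by omega
        have hg2 : q.2.val - q.1.val - 1 < T - 1 := by omega
        simp only [Finset.mem_coe, Finset.mem_product, Finset.mem_range]
        exact ⟨hg1, hg2⟩
      · intro a ha b hb hab
        simp only [Finset.mem_coe, Finset.mem_filter, Finset.mem_univ, true_and] at ha hb
        have h1 : a.1.val = b.1.val := congrArg Prod.fst hab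
        have h2 : a.2.val - a.1.val - 1 = b.2.val - b.1.val - 1 := congrArg Prod.snd hab
        exact Prod.ext (Fin.ext h1) (Fin.ext (by omega))
    have hR : (Finset.univ.filter fun q : Fin S × Fin S =>
        q.2.val < q.1.val ∧ q.1.val < q.2.val + T).card ≤ (S - 1) * (T - 1) := by
      have hc := Finset.card_le_card_of_injOn
        (s := Finset.univ.filter fun q : Fin S × Fin S =>
          q.2.val < q.1.val ∧ q.1.val < q.2.val + T)
        (t := Finset.range (S - 1) ×ˢ Finset.range (T - 1))
        (fun q : Fin S × Fin S => (q.2.val, q.1.val - q.2.val - 1)) ?_ ?_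
      · simpa using hc
      · intro q hq
        simp only [Finset.mem_coe, Finset.mem_filter, Finset.mem_univ, true_and] at hq
        have h2 := q.1.isLt
        have hg1 : q.2.val < S - 1 := by omega
        have hg2 : q.1.val - q.2.val - 1 < T - 1 := by omega
        simp only [Finset.mem_coe, Finset.mem_product, Finset.mem_range]
        exact ⟨hg1, hg2⟩
      · intro a ha b hb hab
        simp only [Finset.mem_coe, Finset.mem_filter, Finset.mem_univ, true_and] at ha hb
        have h1 : a.2.val = b.2.val := congrArg Prod.fst hab
        have h2 : a.1.val - a.2.val - 1 = b.1.val - b.2.val - 1 := congrArg Prod.snd hab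
        exact Prod.ext (Fin.ext (by omega)) (Fin.ext h1)
    calc ((Finset.univ : Finset (Fin S × Fin S)).filter
          (fun q => q.1.val < q.2.val + T ∧ q.2.val < q.1.val + T)).card
        ≤ (((Finset.univ.filter fun q : Fin S × Fin S => q.1 = q.2)
            ∪ (Finset.univ.filter fun q : Fin S × Fin S =>
                q.1.val < q.2.val ∧ q.2.val < q.1.val + T))
            ∪ (Finset.univ.filter fun q : Fin S × Fin S =>
                q.2.val < q.1.val ∧ q.1.val < q.2.val + T)).card := Finset.card_le_card hsub
      _ ≤ ((Finset.univ.filter fun q : Fin S × Fin S => q.1 = q.2)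
            ∪ (Finset.univ.filter fun q : Fin S × Fin S =>
                q.1.val < q.2.val ∧ q.2.val < q.1.val + T)).card
          + (Finset.univ.filter fun q : Fin S × Fin S =>
                q.2.val < q.1.val ∧ q.1.val < q.2.val + T).card := Finset.card_union_le _ _
      _ ≤ ((Finset.univ.filter fun q : Fin S × Fin S => q.1 = q.2).card
          + (Finset.univ.filter fun q : Fin S × Fin S =>
                q.1.val < q.2.val ∧ q.2.val < q.1.val + T).card)
          + (Finset.univ.filter fun q : Fin S × Fin S =>
                q.2.val < q.1.val ∧ q.1.val < q.2.val + T).card :=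
          Nat.add_le_add_right (Finset.card_union_le _ _) _
      _ ≤ S + (S - 1) * (T - 1) + (S - 1) * (T - 1) :=
          Nat.add_le_add (Nat.add_le_add hD hL) hR
  have hsum_ind : ∑ i : Fin S, ∑ j : Fin S, (∑ p : Fin N, u i p * u j p) ^ 2
      ≤ (S : ℝ) + 2 * ((S : ℝ) - 1) * ((T : ℝ) - 1) := by
    have hterm : ∀ i j : Fin S, (∑ p : Fin N, u i p * u j p) ^ 2
        ≤ (if i.val < j.val + T ∧ j.val < i.val + T then (1:ℝ) else 0) := by
      intro i j
      by_cases hc : i.val < j.val + T ∧ j.val < i.val + T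
      · rw [if_pos hc]; exact hGsq i j
      · rw [if_neg hc]
        have hd : j.val + T ≤ i.val ∨ i.val + T ≤ j.val := by omega
        rw [hGzero i j hd]
        simp
    calc ∑ i : Fin S, ∑ j : Fin S, (∑ p : Fin N, u i p * u j p) ^ 2
        ≤ ∑ i : Fin S, ∑ j : Fin S,
            (if i.val < j.val + T ∧ j.val < i.val + T then (1:ℝ) else 0) :=
          Finset.sum_le_sum fun i _ => Finset.sum_le_sum fun j _ => hterm i j
      _ = ∑ q : Fin S × Fin S,
            (if q.1.val < q.2.val + T ∧ q.2.val < q.1.val + T then (1:ℝ) else 0) :=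
          (Fintype.sum_prod_type (f := fun q : Fin S × Fin S =>
            (if q.1.val < q.2.val + T ∧ q.2.val < q.1.val + T then (1:ℝ) else 0))).symm
      _ = (((Finset.univ : Finset (Fin S × Fin S)).filter
            (fun q => q.1.val < q.2.val + T ∧ q.2.val < q.1.val + T)).card : ℝ) :=
          Finset.sum_boole _ _
      _ ≤ ((S + (S - 1) * (T - 1) + (S - 1) * (T - 1) : ℕ) : ℝ) := by exact_mod_cast hcard
      _ = (S : ℝ) + 2 * ((S : ℝ) - 1) * ((T : ℝ) - 1) := by
          push_cast [Nat.cast_sub hS, Nat.cast_sub hT1]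
          ring
  constructor
  · rw [hceil]; exact hspec
  · rw [hceil, hfrob]
    calc ∑ p : Fin N, ∑ q : Fin N, (A p q) ^ 2
        = ((S : ℝ)⁻¹) ^ 2 * ∑ p : Fin N, ∑ q : Fin N, (∑ i : Fin S, u i p * u i q) ^ 2 := by
          rw [Finset.mul_sum]
          refine Finset.sum_congr rfl fun p _ => ?_
          rw [Finset.mul_sum]
          refine Finset.sum_congr rfl fun q _ => ?_
          rw [hApq p q, mul_pow]
      _ = ((S : ℝ)⁻¹) ^ 2 * ∑ i : Fin S, ∑ j : Fin S, (∑ p : Fin N, u i p * u j p) ^ 2 := by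
          rw [hkey]
      _ ≤ ((S : ℝ)⁻¹) ^ 2 * ((S : ℝ) + 2 * ((S : ℝ) - 1) * ((T : ℝ) - 1)) :=
          mul_le_mul_of_nonneg_left hsum_ind (sq_nonneg _)
      _ = ((S : ℝ) + 2 * ((S : ℝ) - 1) * ((T : ℝ) - 1)) / (S : ℝ) ^ 2 := by
          rw [div_eq_mul_inv, ← inv_pow]
          ring
end

section
/- (Frequency grid approximation for matrix trigonometric polynomials.) Let n ≥ 1 and N̂ ≥ 1 be integers, and let C : ℤ → ℂ^{n×n} satisfy C[k] = 0 for |k| ≥ N̂. Define M(s) = Σ_{k=−N̂+1}^{N̂−1} e^{−j2πsk} C[k]. Then for all real s and ŝ with |s − ŝ| ≤ 1/(2π N̂²), ‖M(s)‖₂ ≤ ‖M(ŝ)‖₂ + max_{|k| < N̂} ‖C[k]‖₂. -/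
lemma expLip (x y : ℝ) :
    ‖Complex.exp (↑x * Complex.I) - Complex.exp (↑y * Complex.I)‖ ≤ |x - y| := by
  rw [Complex.exp_mul_I, Complex.exp_mul_I]
  have h : (Complex.cos x + Complex.sin x * Complex.I) -
      (Complex.cos y + Complex.sin y * Complex.I) =
      Complex.ofReal (Real.cos x - Real.cos y) +
        Complex.ofReal (Real.sin x - Real.sin y) * Complex.I := by
    push_cast [← Complex.ofReal_cos, ← Complex.ofReal_sin]
    ring
  rw [h, Complex.norm_def, Complex.normSq_add_mul_I, ← Real.sqrt_sq_eq_abs]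
  apply Real.sqrt_le_sqrt
  have e : (Real.cos x - Real.cos y)^2 + (Real.sin x - Real.sin y)^2
      = 2 - 2 * Real.cos (x - y) := by
    rw [Real.cos_sub]
    nlinarith [Real.sin_sq_add_cos_sq x, Real.sin_sq_add_cos_sq y]
  have hc : Real.cos (x - y) = 1 - 2 * Real.sin ((x - y)/2)^2 := by
    have := Real.sin_sq_eq_half_sub ((x - y)/2)
    rw [show 2 * ((x - y)/2) = x - y by ring] at this
    linarith
  have hs2 : Real.sin ((x - y)/2)^2 ≤ ((x - y)/2)^2 := by
    rw [← sq_abs, ← sq_abs ((x - y)/2)]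
    exact pow_le_pow_left₀ (abs_nonneg _) (Real.abs_sin_le_abs) 2
  nlinarith

lemma sumabs (m : ℕ) : ∑ k ∈ Finset.Icc (-(m:ℤ)) (m:ℤ), |k| = m * (m + 1) := by
  induction m with
  | zero => simp
  | succ m ih =>
    have hset : Finset.Icc (-((m+1:ℕ)):ℤ) ((m+1:ℕ):ℤ)
        = insert (-((m+1:ℕ)):ℤ) (insert ((m+1:ℕ):ℤ) (Finset.Icc (-(m:ℤ)) (m:ℤ))) := by
      ext x; simp only [Finset.mem_Icc, Finset.mem_insert]; push_cast; omega
    rw [hset, Finset.sum_insert (by simp only [Finset.mem_insert, Finset.mem_Icc]; push_cast; omega), Finset.sum_insert (by simp only [Finset.mem_Icc]; push_cast; omega), ih]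
    rw [abs_of_nonpos (by push_cast; omega), abs_of_nonneg (by push_cast; omega)]
    push_cast; ring

theorem frequency_grid_approximation {n Nhat : ℕ} (hn : 1 ≤ n) (hNhat : 1 ≤ Nhat)
    (C : ℤ → Matrix (Fin n) (Fin n) ℂ)
    (hC : ∀ k : ℤ, Nhat ≤ k.natAbs → C k = 0)
    (Mf : ℝ → Matrix (Fin n) (Fin n) ℂ)
    (hMf : ∀ s : ℝ, Mf s = ∑ k ∈ Finset.Icc (-(Nhat : ℤ) + 1) ((Nhat : ℤ) - 1),
        Complex.exp (-(2 * (Real.pi : ℂ) * (s : ℂ) * (k : ℂ)) * Complex.I) • C k)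
    (s shat : ℝ) (hss : |s - shat| ≤ 1 / (2 * Real.pi * (Nhat : ℝ) ^ 2)) :
    spec2 (Mf s) ≤ spec2 (Mf shat) +
      (Finset.Icc (-(Nhat : ℤ) + 1) ((Nhat : ℤ) - 1)).sup'
        (Finset.nonempty_Icc.mpr (by omega)) (fun k => spec2 (C k)) := by
  letI := Matrix.instL2OpNormedAddCommGroup (𝕜 := ℂ) (m := Fin n) (n := Fin n)
  letI := Matrix.instL2OpNormedSpace (𝕜 := ℂ) (m := Fin n) (n := Fin n)
  have hspec : ∀ M : Matrix (Fin n) (Fin n) ℂ, spec2 M = ‖M‖ := fun M => rfl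
  have hπ := Real.pi_pos
  set F := Finset.Icc (-(Nhat : ℤ) + 1) ((Nhat : ℤ) - 1) with hF
  have hne : F.Nonempty := Finset.nonempty_Icc.mpr (by omega)
  set B := F.sup' (Finset.nonempty_Icc.mpr (by omega)) (fun k => spec2 (C k)) with hB
  have hBle : ∀ k ∈ F, ‖C k‖ ≤ B := by
    intro k hk
    rw [← hspec]
    exact Finset.le_sup' (fun k => spec2 (C k)) hk
  have h0F : (0 : ℤ) ∈ F := by simp only [hF, Finset.mem_Icc]; omega
  have hB0 : 0 ≤ B := le_trans (norm_nonneg (C 0)) (hBle 0 h0F)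
  -- per-term exponent bound
  have hterm : ∀ k ∈ F,
      ‖Complex.exp (-(2 * (Real.pi : ℂ) * (s : ℂ) * (k : ℂ)) * Complex.I) • C k -
        Complex.exp (-(2 * (Real.pi : ℂ) * (shat : ℂ) * (k : ℂ)) * Complex.I) • C k‖
        ≤ (2 * Real.pi * |s - shat| * |(k : ℝ)|) * B := by
    intro k hk
    rw [← sub_smul, norm_smul]
    have hx : (-(2 * (Real.pi : ℂ) * (s : ℂ) * (k : ℂ)) * Complex.I)
        = ((-(2 * Real.pi * s * (k:ℝ)) : ℝ) : ℂ) * Complex.I := by push_cast; ring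
    have hy : (-(2 * (Real.pi : ℂ) * (shat : ℂ) * (k : ℂ)) * Complex.I)
        = ((-(2 * Real.pi * shat * (k:ℝ)) : ℝ) : ℂ) * Complex.I := by push_cast; ring
    have hexp : ‖Complex.exp (-(2 * (Real.pi : ℂ) * (s : ℂ) * (k : ℂ)) * Complex.I) -
        Complex.exp (-(2 * (Real.pi : ℂ) * (shat : ℂ) * (k : ℂ)) * Complex.I)‖
        ≤ 2 * Real.pi * |s - shat| * |(k : ℝ)| := by
      rw [hx, hy]
      refine (expLip _ _).trans_eq ?_
      have habs : |(2 * Real.pi) * ((shat - s) * (k:ℝ))|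
          = 2 * Real.pi * |s - shat| * |(k:ℝ)| := by
        rw [abs_mul, abs_mul, abs_mul, abs_two, abs_of_pos hπ, abs_sub_comm shat s]
        ring
      rw [show -(2 * Real.pi * s * (k:ℝ)) - -(2 * Real.pi * shat * (k:ℝ))
          = (2 * Real.pi) * ((shat - s) * (k:ℝ)) by ring, habs]
    exact mul_le_mul hexp (hBle k hk) (norm_nonneg _)
      (by positivity)
  have hsumF : ∑ k ∈ F, |(k : ℝ)| = ((Nhat : ℝ) - 1) * (Nhat : ℝ) := by
    have hFm : F = Finset.Icc (-((Nhat - 1 : ℕ) : ℤ)) (((Nhat - 1 : ℕ) : ℤ)) := by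
      ext x; simp only [hF, Finset.mem_Icc]; omega
    have := sumabs (Nhat - 1)
    calc ∑ k ∈ F, |(k : ℝ)|
        = ((∑ k ∈ Finset.Icc (-((Nhat-1:ℕ)):ℤ) ((Nhat-1:ℕ):ℤ), |k| : ℤ) : ℝ) := by
          rw [hFm]; push_cast [Int.cast_abs]; rfl
      _ = ((Nhat - 1 : ℕ) : ℝ) * (((Nhat - 1 : ℕ) : ℝ) + 1) := by rw [this]; push_cast; ring
      _ = ((Nhat : ℝ) - 1) * (Nhat : ℝ) := by
          have : ((Nhat - 1 : ℕ) : ℝ) = (Nhat : ℝ) - 1 := by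
            have : (1:ℕ) ≤ Nhat := hNhat
            push_cast [Nat.cast_sub this]; ring
          rw [this]; ring
  have key : ‖Mf s - Mf shat‖ ≤ B := by
    rw [hMf, hMf, ← Finset.sum_sub_distrib]
    calc ‖∑ k ∈ F, (Complex.exp (-(2 * (Real.pi : ℂ) * (s : ℂ) * (k : ℂ)) * Complex.I) • C k -
          Complex.exp (-(2 * (Real.pi : ℂ) * (shat : ℂ) * (k : ℂ)) * Complex.I) • C k)‖
        ≤ ∑ k ∈ F, ‖Complex.exp (-(2 * (Real.pi : ℂ) * (s : ℂ) * (k : ℂ)) * Complex.I) • C k -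
          Complex.exp (-(2 * (Real.pi : ℂ) * (shat : ℂ) * (k : ℂ)) * Complex.I) • C k‖ :=
          norm_sum_le _ _
      _ ≤ ∑ k ∈ F, (2 * Real.pi * |s - shat| * |(k : ℝ)|) * B := Finset.sum_le_sum hterm
      _ = (2 * Real.pi * |s - shat|) * B * (∑ k ∈ F, |(k : ℝ)|) := by
          rw [Finset.mul_sum]; apply Finset.sum_congr rfl; intro k _; ring
      _ ≤ B := by
          rw [hsumF]
          have hN1 : (1 : ℝ) ≤ (Nhat : ℝ) := by exact_mod_cast hNhat
          have hpos : (0:ℝ) < 2 * Real.pi * (Nhat : ℝ) ^ 2 := by positivity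
          have h1 : |s - shat| * (2 * Real.pi * (Nhat : ℝ) ^ 2) ≤ 1 :=
            (le_div_iff₀ hpos).mp hss
          nlinarith [abs_nonneg (s - shat), mul_nonneg (mul_nonneg (by positivity : (0:ℝ) ≤ 2 * Real.pi) (abs_nonneg (s-shat))) hB0]
  calc spec2 (Mf s) = ‖Mf shat + (Mf s - Mf shat)‖ := by rw [hspec, add_sub_cancel]
    _ ≤ ‖Mf shat‖ + ‖Mf s - Mf shat‖ := norm_add_le _ _
    _ ≤ spec2 (Mf shat) + B := by rw [hspec]; exact add_le_add_right key _
end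

section
/- (Concentration for weighted sums of centered squares.) Let n ≥ 1, let b > 0, and let x₁, …, xₙ be independent real random variables with E[xᵢ] = 0 and E[exp(xᵢ²/b²)] ≤ 2 for all i. Let a = (a₁, …, aₙ) ∈ ℝⁿ with a ≠ 0. Then for all t ≥ 0, P( Σ_{i=1}^n aᵢ (xᵢ² − E[xᵢ²]) > t ) ≤ exp( −(1/64) · min{ t² / (b⁴ ‖a‖₂²), t / (b² ‖a‖_∞) } ). -/
open Real

set_option maxHeartbeats 1000000 in
/-- Key pointwise inequality: for `0 ≤ w` and `|s| ≤ 1/2`,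
`exp (s*w) ≤ 1 + s*w + 4*s^2*exp w`. -/
lemma key_pointwise {s w : ℝ} (hw : 0 ≤ w) (hs : |s| ≤ 1/2) :
    Real.exp (s * w) ≤ 1 + s * w + 4 * s ^ 2 * Real.exp w := by
  have hs2 : -(1/2) ≤ s ∧ s ≤ 1/2 := abs_le.mp hs
  by_cases h : |s * w| ≤ 1
  · -- small |s*w| : Taylor bound
    have hb := Real.exp_bound h (n := 3) (by norm_num)
    have hb' : Real.exp (s*w) - (1 + s*w + (s*w)^2/2) ≤ |s*w| ^ 3 * (4 / 18) := by
      have : ∑ i ∈ Finset.range 3, (s*w) ^ i / i.factorial = 1 + s*w + (s*w)^2/2 := by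
        simp [Finset.sum_range_succ, Nat.factorial]
        try ring
      calc Real.exp (s*w) - (1 + s*w + (s*w)^2/2)
          ≤ |Real.exp (s*w) - ∑ i ∈ Finset.range 3, (s*w) ^ i / i.factorial| := by
            rw [this]; exact le_abs_self _
        _ ≤ |s*w| ^ 3 * ((3:ℕ).succ / ((3:ℕ).factorial * 3)) := hb
        _ = |s*w| ^ 3 * (4 / 18) := by norm_num [Nat.factorial]
    have habs : |s*w| ^ 3 ≤ (s*w)^2 := by
      calc |s*w| ^ 3 = |s*w| * |s*w|^2 := by ring
        _ ≤ 1 * |s*w|^2 := by gcongr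
        _ = (s*w)^2 := by rw [one_mul, sq_abs]
    have hq : w ^ 2 ≤ 2 * Real.exp w := by
      have := Real.quadratic_le_exp_of_nonneg hw
      nlinarith
    have hss : s^2 ≥ 0 := sq_nonneg s
    nlinarith [Real.exp_pos w, sq_nonneg (s*w)]
  · push_neg at h
    rcases le_or_gt 0 s with hs0 | hs0
    · -- s > 0, s*w > 1, so w > 2 and s ≥ 1/w
      have hsw : 1 < s * w := by
        rcases abs_cases (s*w) with ⟨he, _⟩ | ⟨he, _⟩
        · linarith
        · nlinarith [mul_nonneg hs0 hw]
      have hwpos : 0 < w := by nlinarith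
      have hs_lb : 1 / w < s := by rw [div_lt_iff₀ hwpos]; linarith [mul_comm s w]
      have h1 : Real.exp (s * w) ≤ Real.exp (w / 2) := by
        apply Real.exp_le_exp.mpr; nlinarith
      have h2 : (w/2) ^ 2 ≤ Real.exp (w / 2) := by
        have hu : 0 ≤ w / 2 := by linarith
        have := Real.sum_le_exp_of_nonneg hu 4
        have hsum : ∑ i ∈ Finset.range 4, (w/2) ^ i / i.factorial
            = 1 + w/2 + (w/2)^2/2 + (w/2)^3/6 := by
          simp [Finset.sum_range_succ, Nat.factorial]
          try ring
        rw [hsum] at this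
        nlinarith [sq_nonneg (w/2 - 1), sq_nonneg (2*(w/2) - 3), hu]
      -- exp w = exp(w/2)^2, s^2 ≥ 1/w^2
      have hs2' : 1 / w^2 ≤ s^2 := by
        rw [div_le_iff₀ (by positivity)]
        nlinarith [hs_lb, hwpos]
      have hexpw : Real.exp w = Real.exp (w/2) * Real.exp (w/2) := by
        rw [← Real.exp_add]; ring_nf
      -- goal: exp(w/2) ≤ 1 + s*w + 4 s^2 exp w
      have key : Real.exp (w/2) ≤ 4 * (1/w^2) * Real.exp w := by
        rw [hexpw, show 4 * (1/w^2) * (Real.exp (w/2) * Real.exp (w/2))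
            = 4 * (Real.exp (w/2) * Real.exp (w/2)) / w^2 by ring,
          le_div_iff₀ (by positivity)]
        nlinarith [h2, Real.exp_pos (w/2)]
      have : 4 * (1/w^2) * Real.exp w ≤ 4 * s^2 * Real.exp w := by
        have := Real.exp_pos w
        nlinarith
      nlinarith [h1]
    · -- s < 0, s*w < -1
      have hsw : s * w < -1 := by
        rcases abs_cases (s*w) with ⟨he, _⟩ | ⟨he, _⟩
        · nlinarith [mul_nonpos_of_nonpos_of_nonneg hs0.le hw]
        · linarith
      have hwpos : 0 < w := by nlinarith
      have hs_lb : 1 / w < -s := by rw [div_lt_iff₀ hwpos]; nlinarith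
      have h1 : Real.exp (s * w) ≤ 1 := Real.exp_le_one_iff.mpr (by nlinarith)
      have h3 : w^3/6 ≤ Real.exp w := by
        have h := Real.sum_le_exp_of_nonneg hw 4
        have hsum : ∑ i ∈ Finset.range 4, w ^ i / i.factorial
            = 1 + w + w^2/2 + w^3/6 := by
          simp [Finset.sum_range_succ, Nat.factorial]
          try ring
        rw [hsum] at h
        nlinarith [sq_nonneg w]
      have hs2' : 1 / w^2 ≤ s^2 := by
        rw [div_le_iff₀ (by positivity)]
        nlinarith [hs_lb, hwpos]
      have h5 : 4*(1/w^2) * Real.exp w ≤ 4*s^2*Real.exp w :=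
        mul_le_mul_of_nonneg_right
          (mul_le_mul_of_nonneg_left hs2' (by norm_num : (0:ℝ) ≤ 4))
          (Real.exp_pos w).le
      have hw2 : (0:ℝ) < w^2 := by positivity
      have h6 : (2/3)*w ≤ 4*(1/w^2)*Real.exp w := by
        have heq : 4*(1/w^2)*Real.exp w = 4*Real.exp w/w^2 := by ring
        rw [heq, le_div_iff₀ hw2]
        ring_nf
        ring_nf at h3
        linarith
      have hneg : -(s*w) ≤ w/2 := by nlinarith [hs2.1, hwpos]
      linarith

open MeasureTheory in
/-- Integrability of `exp ∘ W` from a lintegral bound. -/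
lemma exp_integrable {Ω : Type*} [MeasurableSpace Ω] (P : Measure Ω)
    {W : Ω → ℝ} (hWm : Measurable W)
    (hint : ∫⁻ ω, ENNReal.ofReal (Real.exp (W ω)) ∂P ≤ 2) :
    Integrable (fun ω => Real.exp (W ω)) P := by
  refine ⟨hWm.exp.aestronglyMeasurable, ?_⟩
  rw [hasFiniteIntegral_iff_ofReal (Filter.Eventually.of_forall fun ω => (Real.exp_pos _).le)]
  exact lt_of_le_of_lt hint (by norm_num)

open MeasureTheory in
lemma exp_moment_le {Ω : Type*} [MeasurableSpace Ω] (P : Measure Ω)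
    {W : Ω → ℝ} (hWm : Measurable W)
    (hint : ∫⁻ ω, ENNReal.ofReal (Real.exp (W ω)) ∂P ≤ 2) :
    ∫ ω, Real.exp (W ω) ∂P ≤ 2 := by
  rw [integral_eq_lintegral_of_nonneg_ae
    (Filter.Eventually.of_forall fun ω => (Real.exp_pos _).le) hWm.exp.aestronglyMeasurable]
  calc (∫⁻ ω, ENNReal.ofReal (Real.exp (W ω)) ∂P).toReal
      ≤ (2 : ENNReal).toReal := ENNReal.toReal_mono (by norm_num) hint
    _ = 2 := by norm_num

open MeasureTheory in
lemma W_integrable {Ω : Type*} [MeasurableSpace Ω] (P : Measure Ω)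
    {W : Ω → ℝ} (hWm : Measurable W) (hW0 : ∀ ω, 0 ≤ W ω)
    (hint : ∫⁻ ω, ENNReal.ofReal (Real.exp (W ω)) ∂P ≤ 2) :
    Integrable W P := by
  refine (exp_integrable P hWm hint).mono' hWm.aestronglyMeasurable
    (Filter.Eventually.of_forall fun ω => ?_)
  rw [Real.norm_eq_abs, abs_of_nonneg (hW0 ω)]
  linarith [Real.add_one_le_exp (W ω)]

open MeasureTheory in
lemma exp_smul_integrable {Ω : Type*} [MeasurableSpace Ω] (P : Measure Ω)
    {W : Ω → ℝ} (hWm : Measurable W) (hW0 : ∀ ω, 0 ≤ W ω)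
    (hint : ∫⁻ ω, ENNReal.ofReal (Real.exp (W ω)) ∂P ≤ 2)
    {s : ℝ} (hs : |s| ≤ 1/2) (c : ℝ) :
    Integrable (fun ω => Real.exp (s * (W ω - c))) P := by
  have h : (fun ω => Real.exp (s * (W ω - c)))
      = fun ω => Real.exp (s * W ω) * Real.exp (-(s*c)) := by
    funext ω; rw [← Real.exp_add]; ring_nf
  rw [h]
  refine Integrable.mul_const ?_ _
  refine (exp_integrable P hWm hint).mono' (hWm.const_mul s).exp.aestronglyMeasurable
    (Filter.Eventually.of_forall fun ω => ?_)
  rw [Real.norm_eq_abs, abs_of_pos (Real.exp_pos _), Real.exp_le_exp]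
  have h1 := abs_le.mp hs
  nlinarith [hW0 ω]

open MeasureTheory in
/-- Sub-exponential mgf bound for a centered nonnegative variable with
`E exp W ≤ 2`. -/
lemma mgf_centered_le {Ω : Type*} [MeasurableSpace Ω] (P : Measure Ω)
    [IsProbabilityMeasure P]
    {W : Ω → ℝ} (hWm : Measurable W) (hW0 : ∀ ω, 0 ≤ W ω)
    (hint : ∫⁻ ω, ENNReal.ofReal (Real.exp (W ω)) ∂P ≤ 2)
    {s : ℝ} (hs : |s| ≤ 1/2) :
    ∫ ω, Real.exp (s * (W ω - ∫ ω', W ω' ∂P)) ∂P ≤ Real.exp (8 * s ^ 2) := by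
  set c := ∫ ω', W ω' ∂P with hc
  have hexpInt := exp_integrable P hWm hint
  have hWint := W_integrable P hWm hW0 hint
  have hsWint : Integrable (fun ω => Real.exp (s * W ω)) P := by
    have := exp_smul_integrable P hWm hW0 hint hs 0
    simpa using this
  have key : ∀ ω, Real.exp (s * W ω) ≤ 1 + s * W ω + 4 * s^2 * Real.exp (W ω) :=
    fun ω => key_pointwise (hW0 ω) hs
  have hInt2 : Integrable (fun ω => 1 + s * W ω + 4 * s^2 * Real.exp (W ω)) P :=
    ((integrable_const 1).add (hWint.const_mul s)).add (hexpInt.const_mul (4 * s^2))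
  have h1 : ∫ ω, Real.exp (s * W ω) ∂P ≤ 1 + s * c + 8 * s^2 := by
    calc ∫ ω, Real.exp (s * W ω) ∂P
        ≤ ∫ ω, (1 + s * W ω + 4 * s^2 * Real.exp (W ω)) ∂P :=
          integral_mono hsWint hInt2 key
      _ = (∫ ω, (1 + s * W ω) ∂P) + ∫ ω, 4 * s^2 * Real.exp (W ω) ∂P :=
          integral_add ((integrable_const 1).add (hWint.const_mul s))
            (hexpInt.const_mul (4 * s^2))
      _ = ((∫ _ω, (1:ℝ) ∂P) + ∫ ω, s * W ω ∂P) + ∫ ω, 4 * s^2 * Real.exp (W ω) ∂P := by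
          rw [integral_add (integrable_const 1) (hWint.const_mul s)]
      _ = 1 + s * c + 4 * s^2 * ∫ ω, Real.exp (W ω) ∂P := by
          rw [integral_const_mul, integral_const_mul, integral_const]
          simp [hc]
      _ ≤ 1 + s * c + 8 * s^2 := by
          have h2 := exp_moment_le P hWm hint
          nlinarith [sq_nonneg s]
  have heq : ∫ ω, Real.exp (s * (W ω - c)) ∂P
      = Real.exp (-(s*c)) * ∫ ω, Real.exp (s * W ω) ∂P := by
    rw [← integral_const_mul]
    congr 1; funext ω; rw [← Real.exp_add]; ring_nf
  rw [heq]
  have hpos : (0:ℝ) ≤ Real.exp (-(s*c)) := (Real.exp_pos _).le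
  calc Real.exp (-(s*c)) * ∫ ω, Real.exp (s * W ω) ∂P
      ≤ Real.exp (-(s*c)) * (1 + s * c + 8 * s^2) := by
        apply mul_le_mul_of_nonneg_left h1 hpos
    _ ≤ Real.exp (-(s*c)) * Real.exp (s * c + 8 * s^2) := by
        apply mul_le_mul_of_nonneg_left _ hpos
        linarith [Real.add_one_le_exp (s * c + 8 * s^2)]
    _ = Real.exp (8 * s^2) := by rw [← Real.exp_add]; ring_nf

open MeasureTheory ProbabilityTheory in
theorem weighted_centered_squares_concentration
    {Ω : Type*} [MeasurableSpace Ω] (P : Measure Ω) [IsProbabilityMeasure P]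
    (n : ℕ) (hn : 1 ≤ n) (b : ℝ) (hb : 0 < b) (x : Ω → Fin n → ℝ)
    (hmeas : ∀ i : Fin n, Measurable fun ω => x ω i)
    (hindep : iIndepFun (fun i ω => x ω i) P)
    (hmean : ∀ i : Fin n, ∫ ω, x ω i ∂P = 0)
    (hpsi2 : ∀ i : Fin n,
      ∫⁻ ω, ENNReal.ofReal (Real.exp ((x ω i) ^ 2 / b ^ 2)) ∂P ≤ 2)
    (a : Fin n → ℝ) (ha : a ≠ 0)
    (t : ℝ) (ht : 0 ≤ t) :
    (P {ω | ∑ i : Fin n, a i * ((x ω i) ^ 2 - ∫ ω', (x ω' i) ^ 2 ∂P) > t}).toReal ≤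
      Real.exp (-(1 / 64) *
        min (t ^ 2 / (b ^ 4 * ∑ i : Fin n, a i ^ 2)) (t / (b ^ 2 * ⨆ i : Fin n, |a i|))) := by
  haveI : Nonempty (Fin n) := Fin.pos_iff_nonempty.mp hn
  have hb2 : (0:ℝ) < b^2 := by positivity
  have hb4 : (0:ℝ) < b^4 := by positivity
  -- notation
  set m : Fin n → ℝ := fun i => ∫ ω', (x ω' i) ^ 2 ∂P with hm
  set M : ℝ := ⨆ i : Fin n, |a i| with hMdef
  set Sg : ℝ := ∑ i : Fin n, a i ^ 2 with hSgdef
  obtain ⟨i₀, hi₀⟩ : ∃ i, a i ≠ 0 := Function.ne_iff.mp ha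
  have hMub : ∀ i, |a i| ≤ M := fun i =>
    le_ciSup (f := fun j => |a j|) (Set.Finite.bddAbove (Set.finite_range _)) i
  have hM0 : 0 < M := lt_of_lt_of_le (abs_pos.mpr hi₀) (hMub i₀)
  have hSg0 : 0 < Sg := Finset.sum_pos' (fun i _ => sq_nonneg _)
    ⟨i₀, Finset.mem_univ _, by positivity⟩
  set K : ℝ := b^4 * Sg with hKdef
  have hK0 : 0 < K := by positivity
  set L : ℝ := min (t / (16 * K)) (1 / (2 * b^2 * M)) with hLdef
  have hL0 : 0 ≤ L := le_min (by positivity) (by positivity)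
  have hL1 : L ≤ t / (16 * K) := min_le_left _ _
  have hL2 : L ≤ 1 / (2 * b^2 * M) := min_le_right _ _
  -- the random variables
  set Y : Fin n → Ω → ℝ := fun i ω => a i * ((x ω i) ^ 2 - m i) with hYdef
  have hYmeas : ∀ i, Measurable (Y i) :=
    fun i => (((hmeas i).pow_const 2).sub_const (m i)).const_mul (a i)
  have hindepY : iIndepFun Y P := by
    have := hindep.comp (fun i (u : ℝ) => a i * (u ^ 2 - m i))
      (fun i => ((measurable_id.pow_const 2).sub_const (m i)).const_mul (a i))
    exact this
  -- per-variable data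
  set W : Fin n → Ω → ℝ := fun i ω => (x ω i) ^ 2 / b ^ 2 with hWdef
  have hWmeas : ∀ i, Measurable (W i) := fun i => ((hmeas i).pow_const 2).div_const _
  have hW0 : ∀ i ω, 0 ≤ W i ω := fun i ω => by positivity
  have hcW : ∀ i, ∫ ω', W i ω' ∂P = m i / b ^ 2 := fun i => by
    simp only [hWdef]
    rw [integral_div]
  set s : Fin n → ℝ := fun i => L * a i * b^2 with hsdef
  have hsmall : ∀ i, |s i| ≤ 1/2 := by
    intro i
    have h1 : |s i| = L * |a i| * b^2 := by
      rw [hsdef, abs_mul, abs_mul, abs_of_nonneg hL0, abs_of_pos hb2]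
    rw [h1]
    have h2 : L * |a i| * b^2 ≤ L * M * b^2 :=
      mul_le_mul_of_nonneg_right (mul_le_mul_of_nonneg_left (hMub i) hL0) hb2.le
    have h3 : L * M * b^2 ≤ (1 / (2 * b^2 * M)) * M * b^2 :=
      mul_le_mul_of_nonneg_right (mul_le_mul_of_nonneg_right hL2 hM0.le) hb2.le
    have h4 : (1 / (2 * b^2 * M)) * M * b^2 = 1/2 := by
      field_simp
    linarith
  have hkey : ∀ i ω, L * Y i ω = s i * (W i ω - m i / b ^ 2) := by
    intro i ω
    simp only [hYdef, hsdef, hWdef]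
    field_simp
  -- mgf bound for each Y i
  have hmgf : ∀ i, mgf (Y i) P L ≤ Real.exp (8 * (s i)^2) := by
    intro i
    have h := mgf_centered_le P (hWmeas i) (hW0 i) (hpsi2 i) (hsmall i)
    rw [mgf]
    calc ∫ ω, Real.exp (L * Y i ω) ∂P
        = ∫ ω, Real.exp (s i * (W i ω - ∫ ω', W i ω' ∂P)) ∂P := by
          congr 1; funext ω; rw [hkey i ω, hcW i]
      _ ≤ Real.exp (8 * (s i)^2) := h
  -- integrability of exp (L * Y i)
  have hYint : ∀ i, Integrable (fun ω => Real.exp (L * Y i ω)) P := by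
    intro i
    have h := exp_smul_integrable P (hWmeas i) (hW0 i) (hpsi2 i) (hsmall i) (m i / b^2)
    refine h.congr (Filter.Eventually.of_forall fun ω => ?_)
    show Real.exp (s i * (W i ω - m i / b ^ 2)) = Real.exp (L * Y i ω)
    rw [hkey i ω]
  -- Chernoff
  have hSint : Integrable (fun ω => Real.exp (L * (∑ i, Y i) ω)) P :=
    hindepY.integrable_exp_mul_sum hYmeas (fun i _ => hYint i)
  have hch := measure_ge_le_exp_mul_mgf (X := ∑ i, Y i) (μ := P) t hL0 hSint
  -- set inclusion
  have hsub : {ω | ∑ i : Fin n, a i * ((x ω i) ^ 2 - m i) > t}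
      ⊆ {ω | t ≤ (∑ i, Y i) ω} := by
    intro ω hω
    simp only [Set.mem_setOf_eq] at hω ⊢
    rw [Finset.sum_apply]
    exact le_of_lt hω
  have hmono : (P {ω | ∑ i : Fin n, a i * ((x ω i) ^ 2 - m i) > t}).toReal
      ≤ (P {ω | t ≤ (∑ i, Y i) ω}).toReal :=
    ENNReal.toReal_mono (measure_ne_top P _) (measure_mono hsub)
  -- mgf of the sum
  have hprod : mgf (∑ i, Y i) P L = ∏ i, mgf (Y i) P L :=
    hindepY.mgf_sum hYmeas Finset.univ
  have hprodle : mgf (∑ i, Y i) P L ≤ Real.exp (8 * L^2 * b^4 * Sg) := by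
    rw [hprod]
    calc ∏ i, mgf (Y i) P L ≤ ∏ i, Real.exp (8 * (s i)^2) :=
          Finset.prod_le_prod (fun i _ => mgf_nonneg) (fun i _ => hmgf i)
      _ = Real.exp (∑ i, 8 * (s i)^2) := by rw [Real.exp_sum]
      _ = Real.exp (8 * L^2 * b^4 * Sg) := by
          congr 1
          simp only [hsdef]
          rw [hSgdef, Finset.mul_sum]
          congr 1; funext i; ring
  -- final arithmetic
  have harith : Real.exp (-L * t) * Real.exp (8 * L^2 * b^4 * Sg)
      ≤ Real.exp (-(1 / 64) * min (t ^ 2 / K) (t / (b ^ 2 * M))) := by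
    rw [← Real.exp_add, Real.exp_le_exp]
    have hstep1 : 8 * L^2 * b^4 * Sg ≤ L * t / 2 := by
      have h16 : L * (16 * K) ≤ t := by
        rwa [le_div_iff₀ (by positivity)] at hL1
      have h17 := mul_le_mul_of_nonneg_left h16 hL0
      rw [hKdef] at h17
      ring_nf at h17 ⊢
      linarith
    have hA0 : 0 ≤ t^2 / K := by positivity
    have hB0 : 0 ≤ t / (b^2 * M) := by positivity
    have hstep2 : (1 / 64) * min (t ^ 2 / K) (t / (b ^ 2 * M)) ≤ L * t / 2 := by
      rcases min_cases (t / (16 * K)) (1 / (2 * b^2 * M)) with ⟨hLeq, _⟩ | ⟨hLeq, _⟩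
      · have hLt : L * t / 2 = (t^2 / K) / 32 := by
          rw [hLdef, hLeq]; field_simp; ring
        rw [hLt]
        have := min_le_left (t ^ 2 / K) (t / (b ^ 2 * M))
        have hmin0 : 0 ≤ min (t ^ 2 / K) (t / (b ^ 2 * M)) := le_min hA0 hB0
        linarith
      · have hLt : L * t / 2 = (t / (b^2 * M)) / 4 := by
          rw [hLdef, hLeq]; ring
        rw [hLt]
        have := min_le_right (t ^ 2 / K) (t / (b ^ 2 * M))
        have hmin0 : 0 ≤ min (t ^ 2 / K) (t / (b ^ 2 * M)) := le_min hA0 hB0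
        linarith
    linarith
  calc (P {ω | ∑ i : Fin n, a i * ((x ω i) ^ 2 - m i) > t}).toReal
      ≤ Real.exp (-L * t) * mgf (∑ i, Y i) P L := le_trans hmono hch
    _ ≤ Real.exp (-L * t) * Real.exp (8 * L^2 * b^4 * Sg) :=
        mul_le_mul_of_nonneg_left hprodle (Real.exp_pos _).le
    _ ≤ Real.exp (-(1 / 64) * min (t ^ 2 / K) (t / (b ^ 2 * M))) := harith
    _ = Real.exp (-(1 / 64) * min (t ^ 2 / (b ^ 4 * Sg)) (t / (b ^ 2 * M))) := by
        rw [hKdef]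
end

section
/- (Sub-exponential moment generating function of a centered square.) Let b > 0 and let X be a real random variable with E[X] = 0 and E[exp(X²/b²)] ≤ 2. Then for every real λ with |λ| ≤ 1/(4b²), E[ exp( λ (X² − E[X²]) ) ] ≤ exp( 16 b⁴ λ² ) (equivalently, exp((4b²)² λ²)). -/
open MeasureTheory

lemma sq_div_four_le_exp {y : ℝ} (hy : 0 ≤ y) : y^2/4 ≤ Real.exp y := by
  have h1 : y/2 ≤ Real.exp (y/2) := by linarith [Real.add_one_le_exp (y/2)]
  have h2 : (y/2)^2 ≤ (Real.exp (y/2))^2 := pow_le_pow_left₀ (by linarith) h1 2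
  calc y^2/4 = (y/2)^2 := by ring
  _ ≤ (Real.exp (y/2))^2 := h2
  _ = Real.exp y := by rw [sq, ← Real.exp_add]; ring_nf

lemma key_ineq {t y : ℝ} (hy : 0 ≤ y) (ht : |t| ≤ 1/4) :
    Real.exp (t*y) ≤ 1 + t*y + 8*t^2*Real.exp y := by
  have hey := sq_div_four_le_exp hy
  have htl := abs_le.mp ht
  rcases le_or_gt |t*y| 1 with h | h
  · have hb := Real.exp_bound h (by norm_num : 0 < 2)
    rw [Finset.sum_range_succ, Finset.sum_range_succ, Finset.sum_range_zero] at hb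
    norm_num at hb
    have hb2 : Real.exp (t*y) ≤ 1 + t*y + (3/4)*(t*y)^2 := by
      have := abs_le.mp hb
      rw [← abs_mul] at this
      have hsq : |t*y|^2 = (t*y)^2 := sq_abs _
      nlinarith [sq_abs (t*y)]
    nlinarith [sq_nonneg t, sq_nonneg (t*y)]
  · rcases lt_abs.mp h with h1 | h1
    · -- 1 < t*y
      have hty : 0 < t*y := by linarith
      have hypos : 0 < y := by
        rcases eq_or_lt_of_le hy with rfl | h'; · simp at hty
        · exact h'
      have htpos : 0 < t := by
        by_contra hc
        push_neg at hc
        nlinarith [mul_nonpos_of_nonpos_of_nonneg hc hy]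
      have hle : Real.exp (t*y) ≤ Real.exp (y/4) := by
        apply Real.exp_le_exp.mpr; nlinarith
      have hsplit : Real.exp y = Real.exp (y/4) * Real.exp (3*y/4) := by
        rw [← Real.exp_add]; ring_nf
      have h2 : (3*y/4)^2/4 ≤ Real.exp (3*y/4) := sq_div_four_le_exp (by linarith)
      have he1 : 0 < Real.exp (y/4) := Real.exp_pos _
      have hsq1 : 1 ≤ (t*y)^2 := by nlinarith
      have hkey : Real.exp (y/4) ≤ 8*t^2*Real.exp y := by
        have hm : 8*t^2*Real.exp (y/4) * ((3*y/4)^2/4) ≤ 8*t^2*Real.exp (y/4) * Real.exp (3*y/4) :=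
          mul_le_mul_of_nonneg_left h2 (by positivity)
        have hm2 : (9/8) * Real.exp (y/4) ≤ (9/8) * (t*y)^2 * Real.exp (y/4) := by nlinarith
        rw [hsplit]
        nlinarith
      nlinarith [Real.exp_pos (t*y)]
    · -- 1 < -(t*y)
      have hle1 : Real.exp (t*y) ≤ 1 := Real.exp_le_one_iff.mpr (by linarith)
      have h8 : 8*t^2*(y^2/4) ≤ 8*t^2*Real.exp y := by nlinarith [sq_nonneg t]
      nlinarith [h8]

open MeasureTheory in
theorem centered_square_mgf
    {Ω : Type*} [MeasurableSpace Ω] (P : Measure Ω) [IsProbabilityMeasure P]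
    (b : ℝ) (hb : 0 < b) (X : Ω → ℝ) (hmeas : Measurable X)
    (hmean : ∫ ω, X ω ∂P = 0)
    (hpsi2 : ∫⁻ ω, ENNReal.ofReal (Real.exp (X ω ^ 2 / b ^ 2)) ∂P ≤ 2)
    (lam : ℝ) (hlam : |lam| ≤ 1 / (4 * b ^ 2)) :
    ∫⁻ ω, ENNReal.ofReal (Real.exp (lam * (X ω ^ 2 - ∫ ω', X ω' ^ 2 ∂P))) ∂P ≤
      ENNReal.ofReal (Real.exp (16 * b ^ 4 * lam ^ 2)) := by
  set μ2 := ∫ ω', X ω' ^ 2 ∂P with hμ2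
  set f : Ω → ℝ := fun ω => Real.exp (X ω ^ 2 / b ^ 2) with hf
  have hb2 : 0 < b ^ 2 := by positivity
  have hfmeas : Measurable f := by
    apply Real.measurable_exp.comp
    exact ((hmeas.pow_const 2).div_const _)
  have hfnn : ∀ ω, 0 ≤ f ω := fun ω => (Real.exp_pos _).le
  -- f is integrable
  have hfint : Integrable f P := by
    refine ⟨hfmeas.aestronglyMeasurable, ?_⟩
    rw [hasFiniteIntegral_iff_ofReal (Filter.Eventually.of_forall hfnn)]
    exact lt_of_le_of_lt hpsi2 (by norm_num)
  have hEf_eq : ENNReal.ofReal (∫ ω, f ω ∂P) = ∫⁻ ω, ENNReal.ofReal (f ω) ∂P :=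
    ofReal_integral_eq_lintegral_ofReal hfint (Filter.Eventually.of_forall hfnn)
  have hEf : ∫ ω, f ω ∂P ≤ 2 := by
    have h2 : ENNReal.ofReal (∫ ω, f ω ∂P) ≤ ENNReal.ofReal 2 := by
      rw [hEf_eq]; simpa using hpsi2
    exact le_of_not_gt fun hc => absurd h2 (not_le.mpr (ENNReal.ofReal_lt_ofReal_iff_of_nonneg (by norm_num) |>.mpr hc))
  -- X^2 integrable
  have hX2int : Integrable (fun ω => X ω ^ 2) P := by
    refine Integrable.mono' (hfint.const_mul (b^2)) ((hmeas.pow_const 2).aestronglyMeasurable) ?_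
    refine Filter.Eventually.of_forall fun ω => ?_
    rw [Real.norm_eq_abs, abs_of_nonneg (sq_nonneg _)]
    have h1 : X ω ^ 2 / b ^ 2 ≤ f ω := by
      have := Real.add_one_le_exp (X ω ^ 2 / b ^ 2)
      simp only [hf]; linarith
    calc X ω ^ 2 = b^2 * (X ω ^2 / b^2) := by field_simp
    _ ≤ b^2 * f ω := by nlinarith
  -- pointwise bound
  set g : Ω → ℝ := fun ω => 1 + lam * X ω ^ 2 + 8 * lam^2 * b^4 * f ω with hg
  have hpt : ∀ ω, Real.exp (lam * X ω ^ 2) ≤ g ω := by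
    intro ω
    have ht : |lam * b^2| ≤ 1/4 := by
      rw [abs_mul, abs_of_pos hb2]
      calc |lam| * b^2 ≤ (1/(4*b^2)) * b^2 := by nlinarith [abs_nonneg lam]
      _ = 1/4 := by field_simp
    have := key_ineq (y := X ω ^2 / b^2) (by positivity) ht
    have he : lam * b^2 * (X ω ^2 / b^2) = lam * X ω ^2 := by field_simp
    rw [he] at this
    calc Real.exp (lam * X ω ^2) ≤ 1 + lam * X ω ^2 + 8*(lam*b^2)^2 * Real.exp (X ω ^2/b^2) := this
    _ = g ω := by simp only [hg, hf]; ring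
  have hgint : Integrable g P := by
    apply Integrable.add
    · exact (integrable_const 1).add (hX2int.const_mul lam)
    · exact hfint.const_mul _
  -- integral of g
  have hEg : ∫ ω, g ω ∂P ≤ 1 + lam * μ2 + 16 * b^4 * lam^2 := by
    have hi1 : Integrable (fun ω => lam * X ω ^ 2) P := hX2int.const_mul lam
    have hi2 : Integrable (fun ω => 8*lam^2*b^4 * f ω) P := hfint.const_mul _
    have hi0 : Integrable (fun ω => 1 + lam * X ω ^ 2) P := (integrable_const 1).add hi1
    have : ∫ ω, g ω ∂P = 1 + lam * μ2 + 8 * lam^2 * b^4 * ∫ ω, f ω ∂P := by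
      simp only [hg]
      rw [integral_add hi0 hi2, integral_add (integrable_const 1) hi1,
        integral_const, integral_const_mul, integral_const_mul]
      simp [hμ2]
    rw [this]
    nlinarith [sq_nonneg (lam * b^2), hEf]
  have hgnn : ∀ ω, 0 ≤ g ω := fun ω => le_trans (Real.exp_pos _).le (hpt ω)
  -- main chain
  have hrw : ∀ ω, ENNReal.ofReal (Real.exp (lam * (X ω ^ 2 - μ2))) =
      ENNReal.ofReal (Real.exp (-(lam * μ2))) * ENNReal.ofReal (Real.exp (lam * X ω ^ 2)) := by
    intro ω
    rw [← ENNReal.ofReal_mul (Real.exp_pos _).le, ← Real.exp_add]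
    ring_nf
  calc ∫⁻ ω, ENNReal.ofReal (Real.exp (lam * (X ω ^ 2 - μ2))) ∂P
      = ∫⁻ ω, ENNReal.ofReal (Real.exp (-(lam * μ2))) * ENNReal.ofReal (Real.exp (lam * X ω ^ 2)) ∂P := by
        simp_rw [hrw]
    _ = ENNReal.ofReal (Real.exp (-(lam * μ2))) * ∫⁻ ω, ENNReal.ofReal (Real.exp (lam * X ω ^ 2)) ∂P := by
        rw [lintegral_const_mul]
        exact (Real.measurable_exp.comp (measurable_const.mul (hmeas.pow_const 2))).ennreal_ofReal
    _ ≤ ENNReal.ofReal (Real.exp (-(lam * μ2))) * ∫⁻ ω, ENNReal.ofReal (g ω) ∂P := by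
        gcongr with ω
        exact hpt ω
    _ = ENNReal.ofReal (Real.exp (-(lam * μ2))) * ENNReal.ofReal (∫ ω, g ω ∂P) := by
        rw [ofReal_integral_eq_lintegral_ofReal hgint (Filter.Eventually.of_forall hgnn)]
    _ = ENNReal.ofReal (Real.exp (-(lam * μ2)) * ∫ ω, g ω ∂P) := by
        rw [ENNReal.ofReal_mul (Real.exp_pos _).le]
    _ ≤ ENNReal.ofReal (Real.exp (16 * b ^ 4 * lam ^ 2)) := by
        apply ENNReal.ofReal_le_ofReal
        have h1 : ∫ ω, g ω ∂P ≤ Real.exp (lam * μ2 + 16 * b^4 * lam^2) := by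
          refine le_trans hEg ?_
          have := Real.add_one_le_exp (lam * μ2 + 16 * b^4 * lam^2)
          linarith
        calc Real.exp (-(lam * μ2)) * ∫ ω, g ω ∂P
            ≤ Real.exp (-(lam * μ2)) * Real.exp (lam * μ2 + 16 * b^4 * lam^2) := by
              exact mul_le_mul_of_nonneg_left h1 (Real.exp_pos _).le
          _ = Real.exp (16 * b ^ 4 * lam ^ 2) := by rw [← Real.exp_add]; ring_nf
end
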